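/- Let G and H be graphs, S = {x, y, z} ⊆ V(G □ H) with x ∈ H(u₁), y ∈ H(u₂), z ∈ H(u₃) for distinct vertices u₁, u₂, u₃ of G. Let T₁, T₂ be two internally disjoint minimum pendant Steiner trees connecting {u₁,u₂,u₃} in G, and let T₁', T₂' be two internally disjoint pendant Steiner trees in H connecting {x, y', z'}, where y', z' are the projections of y, z to H(u₁). Then the subgraph (T₁ ∪ T₂) □ (T₁' ∪ T₂') of G □ H contains at least 3 pairwise internally disjoint pendant S-Steiner trees. -/

import Mathlib

open SimpleGraph

/-- `T` is a pendant `S`-Steiner tree in `G`: a subtree of `G` containing `S` in which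
every vertex of `S` has degree exactly one. -/
def IsPendantSteinerTree {V : Type*} (G : SimpleGraph V) (S : Set V) (T : G.Subgraph) : Prop :=
  T.coe.IsTree ∧ S ⊆ T.verts ∧ ∀ v ∈ S, (T.neighborSet v).ncard = 1

/-- Two (pendant) `S`-Steiner trees are internally disjoint: edge-disjoint with
vertex intersection exactly `S`. -/
def InternallyDisjoint {V : Type*} (G : SimpleGraph V) (S : Set V) (T T' : G.Subgraph) : Prop :=
  T.edgeSet ∩ T'.edgeSet = ∅ ∧ T.verts ∩ T'.verts = S

/-- There exist `ℓ` pairwise internally disjoint pendant `S`-Steiner trees in `G`. -/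
def HasPendantTrees {V : Type*} (G : SimpleGraph V) (S : Set V) (ℓ : ℕ) : Prop :=
  ∃ T : Fin ℓ → G.Subgraph, (∀ i, IsPendantSteinerTree G S (T i)) ∧
    ∀ i j, i ≠ j → InternallyDisjoint G S (T i) (T j)

/-- The pendant tree `k`-connectivity `τ_k(G)`: the largest `ℓ` such that every `k`-set of
vertices admits `ℓ` pairwise internally disjoint pendant Steiner trees. -/
noncomputable def pendantConn {V : Type*} (G : SimpleGraph V) (k : ℕ) : ℕ :=
  sSup {ℓ | ∀ S : Finset V, S.card = k → HasPendantTrees G (↑S) ℓ}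

/-- The minimum degree of a graph, via neighbour sets. -/
noncomputable def minDeg {V : Type*} (G : SimpleGraph V) : ℕ :=
  sInf (Set.range fun v => (G.neighborSet v).ncard)

/-- `G` is `k`-connected. -/
def IsKConnected {V : Type*} [Fintype V] (G : SimpleGraph V) (k : ℕ) : Prop :=
  k < Fintype.card V ∧
    ∀ U : Finset V, U.card < k → (G.induce ((↑U : Set V)ᶜ)).Connected

/-- The vertex connectivity `κ(G)`. -/
noncomputable def vertexConn {V : Type*} [Fintype V] (G : SimpleGraph V) : ℕ :=
  sSup {k | IsKConnected G k}

/-- The box product of a subgraph of `G` and a subgraph of `H`, as a subgraph of `G □ H`. -/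
def subgraphBox {α β : Type*} {G : SimpleGraph α} {H : SimpleGraph β}
    (A : G.Subgraph) (B : H.Subgraph) : (G □ H).Subgraph where
  verts := A.verts ×ˢ B.verts
  Adj x y := (A.Adj x.1 y.1 ∧ x.2 = y.2 ∧ x.2 ∈ B.verts) ∨
    (B.Adj x.2 y.2 ∧ x.1 = y.1 ∧ x.1 ∈ A.verts)
  adj_sub := by
    rintro x y (⟨h, h2, -⟩ | ⟨h, h2, -⟩)
    · exact Or.inl ⟨A.adj_sub h, h2⟩
    · exact Or.inr ⟨B.adj_sub h, h2⟩
  edge_vert := by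
    rintro x y (⟨h, h2, hb⟩ | ⟨h, h2, ha⟩)
    · exact ⟨A.edge_vert h, hb⟩
    · exact ⟨ha, B.edge_vert h⟩
  symm := by
    constructor
    rintro x y (⟨h, h2, hb⟩ | ⟨h, h2, ha⟩)
    · exact Or.inl ⟨A.adj_symm h, h2.symm, h2 ▸ hb⟩
    · exact Or.inr ⟨B.adj_symm h, h2.symm, h2 ▸ ha⟩


namespace StTools
variable {W : Type*} {K : SimpleGraph W}


variable {W : Type*} {K : SimpleGraph W}

lemma nbr_empty {A : K.Subgraph} {v : W} (hv : v ∉ A.verts) :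
    A.neighborSet v = ∅ := by
  ext w
  simp only [Subgraph.mem_neighborSet, Set.mem_empty_iff_false, iff_false]
  exact fun h => hv (A.edge_vert h)

lemma subgraphOfAdj_le {A : K.Subgraph} {x y : W} (h : A.Adj x y) :
    K.subgraphOfAdj (A.adj_sub h) ≤ A := by
  constructor
  · intro z hz
    simp only [subgraphOfAdj_verts, Set.mem_insert_iff, Set.mem_singleton_iff] at hz
    rcases hz with rfl | rfl
    exacts [A.edge_vert h, A.edge_vert h.symm]
  · intro z w hzw
    simp only [subgraphOfAdj_adj, Sym2.eq, Sym2.rel_iff', Prod.mk.injEq, Prod.swap_prod_mk] at hzw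
    rcases hzw with ⟨rfl, rfl⟩ | ⟨rfl, rfl⟩
    exacts [h, h.symm]

lemma isAcyclic_of_all_eq {X : Type*} {Q : SimpleGraph X} {A B : X}
    (hV : ∀ z : X, z = A ∨ z = B) : Q.IsAcyclic := by
  intro v c hc
  have h3 := hc.three_le_length
  have hnd := ((Walk.isCycle_def _).mp hc).2.2
  cases c with
  | nil => simp at h3
  | @cons _ b _ h p =>
    rw [Walk.support_cons, List.tail_cons] at hnd
    have hlen : 3 ≤ p.support.length := by
      rw [Walk.length_support]
      simpa using h3
    obtain ⟨x1, l1, hl1⟩ := List.exists_cons_of_ne_nil (l := p.support)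
      (by rintro h0; rw [h0] at hlen; simp at hlen)
    rw [hl1] at hlen hnd
    obtain ⟨x2, l2, hl2⟩ := List.exists_cons_of_ne_nil (l := l1)
      (by rintro h0; rw [h0] at hlen; simp at hlen)
    rw [hl2] at hlen hnd
    obtain ⟨x3, l3, hl3⟩ := List.exists_cons_of_ne_nil (l := l2)
      (by rintro h0; rw [h0] at hlen; simp at hlen)
    rw [hl3] at hnd
    simp only [List.nodup_cons, List.mem_cons, not_or] at hnd
    rcases hV x1 with rfl | rfl <;> rcases hV x2 with h2 | h2 <;> rcases hV x3 with h3' | h3' <;>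
      simp_all

lemma singleton_coe_isTree (v : W) : (K.singletonSubgraph v).coe.IsTree := by
  constructor
  · exact (SimpleGraph.Subgraph.singletonSubgraph_connected (v := v)).coe
  · exact isAcyclic_of_all_eq (A := (⟨v, rfl⟩ : (K.singletonSubgraph v).verts))
      (B := ⟨v, rfl⟩) (fun z => Or.inl (Subtype.ext z.2))

lemma subgraphOfAdj_coe_isTree {x y : W} (h : K.Adj x y) :
    (K.subgraphOfAdj h).coe.IsTree := by
  constructor
  · exact (SimpleGraph.Subgraph.subgraphOfAdj_connected h).coe
  · refine isAcyclic_of_all_eq (A := (⟨x, by simp⟩ : (K.subgraphOfAdj h).verts))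
      (B := ⟨y, by simp⟩) (fun z => ?_)
    have := z.2
    simp only [subgraphOfAdj_verts, Set.mem_insert_iff, Set.mem_singleton_iff] at this
    rcases this with h1 | h1
    · exact Or.inl (Subtype.ext h1)
    · exact Or.inr (Subtype.ext h1)


variable {W : Type*} {K : SimpleGraph W}

lemma exists_coe_walk {A : K.Subgraph} :
    ∀ {x y : W} (w : K.Walk x y), w.toSubgraph ≤ A → ∀ (hx : x ∈ A.verts) (hy : y ∈ A.verts),
      ∃ ww : A.coe.Walk ⟨x, hx⟩ ⟨y, hy⟩, ww.map A.hom = w := by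
  intro x y w
  induction w with
  | nil => exact fun _ _ _ => ⟨Walk.nil, rfl⟩
  | @cons u b v h p ih =>
    intro hle hx hy
    have hadj : A.Adj u b := hle.2 (by simp : (Walk.cons h p).toSubgraph.Adj u b)
    have hb : b ∈ A.verts := A.edge_vert hadj.symm
    obtain ⟨ww, hww⟩ := ih (le_trans le_sup_right hle) hb hy
    exact ⟨Walk.cons (by exact hadj : A.coe.Adj ⟨u, hx⟩ ⟨b, hb⟩) ww, by subst hww; rfl⟩

lemma toSubgraph_map_hom_le {A : K.Subgraph} {u v : A.verts} (r : A.coe.Walk u v) :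
    (r.map A.hom).toSubgraph ≤ A := by
  induction r with
  | nil => simpa [Walk.toSubgraph] using (singletonSubgraph_le_iff _ _).mpr u.2
  | @cons a b c h p ih =>
    rw [Walk.map_cons, Walk.toSubgraph]
    exact sup_le (subgraphOfAdj_le (show A.Adj ↑a ↑b from h)) ih

lemma walk_decomp {A B : K.Subgraph} {p : W} (hAB : A.verts ∩ B.verts ⊆ {p}) :
    ∀ {x y : W} (q : K.Walk x y), q.toSubgraph ≤ A ⊔ B → y ∈ A.verts →
    (x ∈ A.verts → ∃ w : K.Walk x y, w.toSubgraph ≤ A ∧ ∀ e ∈ w.edges, e ∈ q.edges) ∧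
    (x ∈ B.verts → ∃ w : K.Walk p y, w.toSubgraph ≤ A ∧ ∀ e ∈ w.edges, e ∈ q.edges) := by
  intro x y q
  induction q with
  | @nil u =>
    intro _ hy
    constructor
    · intro _
      exact ⟨Walk.nil, by simpa [Walk.toSubgraph] using (singletonSubgraph_le_iff _ _).mpr hy,
        by simp⟩
    · intro hx
      have hxp : u = p := hAB ⟨hy, hx⟩
      subst hxp
      exact ⟨Walk.nil, by simpa [Walk.toSubgraph] using (singletonSubgraph_le_iff _ _).mpr hy,
        by simp⟩
  | @cons u b v h q' ih =>
    intro hq hy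
    have hadj : (A ⊔ B).Adj u b := hq.2 (by simp : (Walk.cons h q').toSubgraph.Adj u b)
    have IH := ih (le_trans le_sup_right hq) hy
    rcases hadj with hadj | hadj
    · have hu : u ∈ A.verts := A.edge_vert hadj
      have hb : b ∈ A.verts := A.edge_vert hadj.symm
      have main : ∃ w : K.Walk u v, w.toSubgraph ≤ A ∧
          ∀ e ∈ w.edges, e ∈ (Walk.cons h q').edges := by
        obtain ⟨w', hw1, hw2⟩ := IH.1 hb
        refine ⟨Walk.cons h w', ?_, ?_⟩
        · rw [Walk.toSubgraph]
          exact sup_le (subgraphOfAdj_le hadj) hw1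
        · intro e he
          simp only [Walk.edges_cons, List.mem_cons] at he ⊢
          rcases he with he | he
          · exact Or.inl he
          · exact Or.inr (hw2 e he)
      refine ⟨fun _ => main, fun hx => ?_⟩
      have hxp : u = p := hAB ⟨hu, hx⟩
      subst hxp
      exact main
    · have hu : u ∈ B.verts := B.edge_vert hadj
      have hb : b ∈ B.verts := B.edge_vert hadj.symm
      have main : ∃ w : K.Walk p v, w.toSubgraph ≤ A ∧
          ∀ e ∈ w.edges, e ∈ (Walk.cons h q').edges := by
        obtain ⟨w', hw1, hw2⟩ := IH.2 hb
        exact ⟨w', hw1, fun e he => by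
          simp only [Walk.edges_cons, List.mem_cons]
          exact Or.inr (hw2 e he)⟩
      refine ⟨fun hx => ?_, fun _ => main⟩
      have hxp : u = p := hAB ⟨hx, hu⟩
      subst hxp
      exact main


lemma isTree_of_iso {X Y : Type*} {Q : SimpleGraph X} {R : SimpleGraph Y} (e : Q ≃g R)
    (h : Q.IsTree) : R.IsTree := by
  constructor
  · exact h.isConnected.map e.toHom e.toEquiv.surjective
  · intro v c hc
    have := hc.map (f := e.symm.toHom) e.symm.toEquiv.injective
    exact h.IsAcyclic _ this

lemma isBridge_sup_of_left {A B C : K.Subgraph} (hC : C = A ⊔ B) {p : W}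
    (hAB : A.verts ∩ B.verts ⊆ {p}) (hA : A.coe.IsAcyclic)
    {v w : C.verts} (hvw : A.Adj ↑v ↑w) :
    C.coe.IsBridge s(v, w) := by
  subst hC
  rw [isBridge_iff]
  rintro ⟨q⟩
  have hq_edges : s(v, w) ∉ q.edges := by
    intro hmem
    have := q.edges_subset_edgeSet hmem
    rw [edgeSet_deleteEdges] at this
    simp at this
  have hsub : ∀ e ∈ q.edges, e ∈ (A ⊔ B).coe.edgeSet := fun e he =>
    edgeSet_mono (sdiff_le) (q.edges_subset_edgeSet he)
  set q' : (A ⊔ B).coe.Walk v w := q.transfer _ hsub with hq'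
  have hq'_edges : s(v, w) ∉ q'.edges := by
    rw [hq', Walk.edges_transfer]; exact hq_edges
  set q0 : K.Walk ↑v ↑w := q'.map (A ⊔ B).hom with hq0
  have hq0_le : q0.toSubgraph ≤ A ⊔ B := toSubgraph_map_hom_le q'
  have hvA : ↑v ∈ A.verts := A.edge_vert hvw
  have hwA : ↑w ∈ A.verts := A.edge_vert hvw.symm
  have hq0_edges : s((v : W), (w : W)) ∉ q0.edges := by
    intro hmem
    rw [hq0] at hmem
    replace hmem : s((v : W), (w : W)) ∈ q'.edges.map (Sym2.map (A ⊔ B).hom) := by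
      rw [← Walk.edges_map]; exact hmem
    rw [List.mem_map] at hmem
    obtain ⟨e, he, hee⟩ := hmem
    apply hq'_edges
    have : e = s(v, w) := Sym2.map.injective Subtype.val_injective (by exact hee)
    rwa [this] at he
  obtain ⟨w0, hw0_le, hw0_edges⟩ := (walk_decomp hAB q0 hq0_le hwA).1 hvA
  have hw0e : s((v : W), (w : W)) ∉ w0.edges := fun hm => hq0_edges (hw0_edges _ hm)
  obtain ⟨ww, hww⟩ := exists_coe_walk w0 hw0_le hvA hwA
  have hwwe : s((⟨↑v, hvA⟩ : A.verts), (⟨↑w, hwA⟩ : A.verts)) ∉ ww.edges := by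
    intro hm
    apply hw0e
    have h' : s((v : W), (w : W)) ∈ ww.edges.map (Sym2.map A.hom) := List.mem_map.mpr ⟨_, hm, rfl⟩
    rw [← Walk.edges_map, hww] at h'
    exact h'
  have hbr := (isAcyclic_iff_forall_adj_isBridge.mp hA)
    (show A.coe.Adj ⟨↑v, hvA⟩ ⟨↑w, hwA⟩ from hvw)
  rw [isBridge_iff] at hbr
  exact hbr ⟨ww.toDeleteEdge _ hwwe⟩

lemma isTree_sup {A B : K.Subgraph} {p : W} (hA : A.coe.IsTree) (hB : B.coe.IsTree)
    (hAB : A.verts ∩ B.verts = {p}) : (A ⊔ B).coe.IsTree := by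
  constructor
  · refine Subgraph.connected_iff'.mp (Subgraph.connected_sup (Subgraph.connected_iff'.mpr
      hA.isConnected).preconnected (Subgraph.connected_iff'.mpr hB.isConnected).preconnected ?_)
    rw [Subgraph.verts_inf, hAB]
    exact ⟨p, rfl⟩
  · rw [isAcyclic_iff_forall_adj_isBridge]
    intro v w hvw
    rcases hvw with hvw | hvw
    · exact isBridge_sup_of_left rfl hAB.subset hA.IsAcyclic hvw
    · exact isBridge_sup_of_left (sup_comm A B) (by rw [Set.inter_comm]; exact hAB.subset)
        hB.IsAcyclic hvw


lemma isTree_toSubgraph {x y : W} : ∀ (q : K.Walk x y), q.IsPath → q.toSubgraph.coe.IsTree := by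
  intro q
  induction q with
  | nil => exact fun _ => singleton_coe_isTree _
  | @cons u b v h p ih =>
    intro hq
    rw [Walk.toSubgraph]
    refine isTree_sup (subgraphOfAdj_coe_isTree h) (ih hq.of_cons) (p := b) ?_
    ext z
    simp only [subgraphOfAdj_verts, Walk.verts_toSubgraph, Set.mem_inter_iff, Set.mem_insert_iff,
      Set.mem_singleton_iff, Set.mem_setOf_eq]
    constructor
    · rintro ⟨rfl | rfl, hz⟩
      · exact absurd hz ((Walk.cons_isPath_iff h p).mp hq).2
      · rfl
    · rintro rfl
      exact ⟨Or.inr rfl, p.start_mem_support⟩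

lemma ncard_start {x y : W} (q : K.Walk x y) (hq : q.IsPath) (hne : x ≠ y) :
    (q.toSubgraph.neighborSet x).ncard = 1 := by
  cases q with
  | nil => exact absurd rfl hne
  | @cons _ b _ h p =>
    have hx : x ∉ p.support := ((Walk.cons_isPath_iff h p).mp hq).2
    have h1 : p.toSubgraph.neighborSet x = ∅ :=
      nbr_empty (by rw [Walk.verts_toSubgraph]; exact hx)
    rw [Walk.toSubgraph, Subgraph.neighborSet_sup, h1, Set.union_empty,
      neighborSet_fst_subgraphOfAdj]
    exact Set.ncard_singleton _

lemma ncard_end {x y : W} (q : K.Walk x y) (hq : q.IsPath) (hne : x ≠ y) :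
    (q.toSubgraph.neighborSet y).ncard = 1 := by
  have := ncard_start q.reverse hq.reverse hne.symm
  rwa [Walk.toSubgraph_reverse] at this

lemma ncard_mid {x y : W} : ∀ (q : K.Walk x y), q.IsPath → ∀ z, z ∈ q.support → z ≠ x → z ≠ y →
    (q.toSubgraph.neighborSet z).ncard = 2 := by
  intro q
  induction q with
  | nil =>
    intro _ z hz hzx _
    simp only [Walk.support_nil, List.mem_singleton] at hz
    exact absurd hz hzx
  | @cons u b v h p ih =>
    intro hq z hz hzx hzy
    have hzp : z ∈ p.support := by
      have hz' := hz
      rw [Walk.support_cons] at hz'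
      rcases List.mem_cons.mp hz' with h' | h'
      · exact absurd h' hzx
      · exact h'
    by_cases hzb : z = b
    · subst hzb
      have hby : z ≠ v := hzy
      have h1 : (p.toSubgraph.neighborSet z).ncard = 1 := ncard_start p hq.of_cons hby
      obtain ⟨w, hw⟩ := Set.ncard_eq_one.mp h1
      have hwu : w ≠ u := by
        rintro rfl
        have : w ∈ p.toSubgraph.neighborSet z := by rw [hw]; rfl
        have hv := p.toSubgraph.edge_vert (Subgraph.mem_neighborSet _ _ _ |>.mp this).symm
        rw [Walk.verts_toSubgraph] at hv
        exact ((Walk.cons_isPath_iff h p).mp hq).2 hv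
      rw [Walk.toSubgraph, Subgraph.neighborSet_sup, neighborSet_snd_subgraphOfAdj, hw]
      rw [Set.singleton_union]
      exact Set.ncard_pair (Ne.symm hwu)
    · have h0 : (K.subgraphOfAdj h).neighborSet z = ∅ :=
        neighborSet_subgraphOfAdj_of_ne_of_ne h hzx hzb
      rw [Walk.toSubgraph, Subgraph.neighborSet_sup, h0, Set.empty_union]
      exact ih hq.of_cons z hzp hzb hzy

lemma exists_path_subgraph (T : K.Subgraph) (hT : T.coe.IsTree) {x y : W}
    (hx : x ∈ T.verts) (hy : y ∈ T.verts) (hxy : x ≠ y) :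
    ∃ P : K.Subgraph, P ≤ T ∧ P.coe.IsTree ∧ x ∈ P.verts ∧ y ∈ P.verts ∧
      (P.neighborSet x).ncard = 1 ∧ (P.neighborSet y).ncard = 1 ∧
      ∀ z ∈ P.verts, z ≠ x → z ≠ y → (P.neighborSet z).ncard = 2 := by
  classical
  obtain ⟨r⟩ := hT.isConnected.preconnected ⟨x, hx⟩ ⟨y, hy⟩
  set q : T.coe.Path ⟨x, hx⟩ ⟨y, hy⟩ := r.toPath with hqdef
  have hpath : (q.1.map T.hom).IsPath := Walk.map_isPath_of_injective Subgraph.hom_injective q.2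
  refine ⟨(q.1.map T.hom).toSubgraph, toSubgraph_map_hom_le q.1, isTree_toSubgraph _ hpath,
    Walk.start_mem_verts_toSubgraph _, Walk.end_mem_verts_toSubgraph _,
    ncard_start _ hpath hxy, ncard_end _ hpath hxy, ?_⟩
  intro z hz hzx hzy
  exact ncard_mid _ hpath z (by rwa [← Walk.mem_verts_toSubgraph]) hzx hzy

lemma verts_eq_pair {A : K.Subgraph} (hconn : A.coe.Connected) {x y : W} (hxy : A.Adj x y)
    (hx : A.neighborSet x = {y}) (hy : A.neighborSet y = {x}) : A.verts = {x, y} := by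
  classical
  ext z
  simp only [Set.mem_insert_iff, Set.mem_singleton_iff]
  constructor
  · intro hz
    obtain ⟨r⟩ := hconn.preconnected ⟨x, A.edge_vert hxy⟩ ⟨z, hz⟩
    obtain ⟨w, hw⟩ := r.toPath
    cases w with
    | nil => left; rfl
    | @cons _ b _ h1 w1 =>
      have hb : (b : W) = y := by
        have : (b : W) ∈ A.neighborSet x := h1
        rwa [hx, Set.mem_singleton_iff] at this
      cases w1 with
      | nil => exact Or.inr hb
      | @cons _ c _ h2 w2 =>
        exfalso
        have hc : (c : W) = x := by
          have : A.Adj (b : W) (c : W) := h2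
          rw [hb] at this
          have : (c : W) ∈ A.neighborSet y := this
          rwa [hy, Set.mem_singleton_iff] at this
        have hcx : c = (⟨x, A.edge_vert hxy⟩ : A.verts) := Subtype.ext hc
        have hsup := ((Walk.cons_isPath_iff _ _).mp hw).2
        apply hsup
        rw [Walk.support_cons]
        right
        exact hcx ▸ w2.start_mem_support
  · rintro (rfl | rfl)
    exacts [A.edge_vert hxy, A.edge_vert hxy.symm]


lemma unique_nbr {A : K.Subgraph} {x : W} (h : (A.neighborSet x).ncard = 1) :
    ∃ d, A.neighborSet x = {d} ∧ A.Adj x d := by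
  obtain ⟨d, hd⟩ := Set.ncard_eq_one.mp h
  exact ⟨d, hd, by rw [← Subgraph.mem_neighborSet, hd]; rfl⟩

lemma not_adj_of_leaves {A : K.Subgraph} (hA : A.coe.IsTree) {x y z : W}
    (hx1 : (A.neighborSet x).ncard = 1) (hy1 : (A.neighborSet y).ncard = 1)
    (hz : z ∈ A.verts) (hzx : z ≠ x) (hzy : z ≠ y) : ¬ A.Adj x y := by
  intro hadj
  obtain ⟨d, hd, -⟩ := unique_nbr hx1
  obtain ⟨d', hd', -⟩ := unique_nbr hy1
  have hdy : d = y := by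
    have : y ∈ A.neighborSet x := hadj
    rw [hd] at this
    exact this.symm
  have hdx : d' = x := by
    have : x ∈ A.neighborSet y := hadj.symm
    rw [hd'] at this
    exact this.symm
  subst hdy hdx
  have := verts_eq_pair hA.isConnected hadj hd hd'
  rw [this] at hz
  rcases hz with h | h
  exacts [hzx h, hzy h]

lemma leaf_not_mem_path {P T : K.Subgraph} {x y z : W} (hPT : P ≤ T)
    (hmid : ∀ z ∈ P.verts, z ≠ x → z ≠ y → (P.neighborSet z).ncard = 2)
    (hleaf : (T.neighborSet z).ncard = 1) (hzx : z ≠ x) (hzy : z ≠ y) : z ∉ P.verts := by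
  intro hz
  have h2 := hmid z hz hzx hzy
  obtain ⟨d, hd⟩ := Set.ncard_eq_one.mp hleaf
  have hsub := Subgraph.neighborSet_subset_of_subgraph hPT z
  have hfin : (T.neighborSet z).Finite := by rw [hd]; exact Set.finite_singleton d
  have := Set.ncard_le_ncard hsub hfin
  omega
variable {α V : Type*} {G : SimpleGraph α} {H : SimpleGraph V}

/-- Horizontal copy of a subgraph of `G` at height `h`. -/
def hcopy (A : G.Subgraph) (h : V) : (G □ H).Subgraph where
  verts := A.verts ×ˢ {h}
  Adj x y := A.Adj x.1 y.1 ∧ x.2 = h ∧ y.2 = h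
  adj_sub := fun ⟨ha, h1, h2⟩ => Or.inl ⟨A.adj_sub ha, h1.trans h2.symm⟩
  edge_vert := fun ⟨ha, h1, _⟩ => ⟨A.edge_vert ha, h1⟩
  symm := ⟨fun _ _ ⟨ha, h1, h2⟩ => ⟨ha.symm, h2, h1⟩⟩

/-- Vertical copy of a subgraph of `H` at column `w`. -/
def vcopy (w : α) (B : H.Subgraph) : (G □ H).Subgraph where
  verts := {w} ×ˢ B.verts
  Adj x y := B.Adj x.2 y.2 ∧ x.1 = w ∧ y.1 = w
  adj_sub := fun ⟨hb, h1, h2⟩ => Or.inr ⟨B.adj_sub hb, h1.trans h2.symm⟩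
  edge_vert := fun ⟨hb, h1, _⟩ => ⟨h1, B.edge_vert hb⟩
  symm := ⟨fun _ _ ⟨hb, h1, h2⟩ => ⟨hb.symm, h2, h1⟩⟩

@[simp] lemma hcopy_verts (A : G.Subgraph) (h : V) :
    (hcopy (H := H) A h).verts = A.verts ×ˢ {h} := rfl
@[simp] lemma vcopy_verts (w : α) (B : H.Subgraph) :
    (vcopy (G := G) w B).verts = {w} ×ˢ B.verts := rfl
@[simp] lemma hcopy_adj {A : G.Subgraph} {h : V} {x y : α × V} :
    (hcopy (H := H) A h).Adj x y ↔ A.Adj x.1 y.1 ∧ x.2 = h ∧ y.2 = h := Iff.rfl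
@[simp] lemma vcopy_adj {w : α} {B : H.Subgraph} {x y : α × V} :
    (vcopy (G := G) w B).Adj x y ↔ B.Adj x.2 y.2 ∧ x.1 = w ∧ y.1 = w := Iff.rfl

lemma hcopy_le_box {A A' : G.Subgraph} {B' : H.Subgraph} {h : V}
    (hA : A ≤ A') (hh : h ∈ B'.verts) : hcopy A h ≤ subgraphBox A' B' := by
  constructor
  · rintro ⟨x1, x2⟩ ⟨hx1, hx2⟩
    exact ⟨hA.1 hx1, by simp_all⟩
  · rintro x y ⟨ha, h1, h2⟩
    exact Or.inl ⟨hA.2 ha, h1.trans h2.symm, h1 ▸ hh⟩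

lemma vcopy_le_box {A' : G.Subgraph} {B B' : H.Subgraph} {w : α}
    (hB : B ≤ B') (hw : w ∈ A'.verts) : vcopy w B ≤ subgraphBox A' B' := by
  constructor
  · rintro ⟨x1, x2⟩ ⟨hx1, hx2⟩
    exact ⟨by simp_all, hB.1 hx2⟩
  · rintro x y ⟨hb, h1, h2⟩
    exact Or.inr ⟨hB.2 hb, h1.trans h2.symm, h1 ▸ hw⟩

lemma hcopy_nbr (A : G.Subgraph) (h : V) (v : α) :
    (hcopy (H := H) A h).neighborSet (v, h) = (fun z => (z, h)) '' A.neighborSet v := by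
  ext ⟨z1, z2⟩
  simp only [Subgraph.mem_neighborSet, hcopy_adj, Set.mem_image]
  constructor
  · rintro ⟨ha, -, rfl⟩
    exact ⟨z1, ha, rfl⟩
  · rintro ⟨z, hz, hzz⟩
    cases hzz
    exact ⟨hz, by simp, by simp⟩

lemma hcopy_nbr_ncard (A : G.Subgraph) (h : V) (v : α) :
    ((hcopy (H := H) A h).neighborSet (v, h)).ncard = (A.neighborSet v).ncard := by
  rw [hcopy_nbr]
  exact Set.ncard_image_of_injective _ (fun a b hab => (Prod.ext_iff.mp hab).1)

lemma hcopy_nbr_empty (A : G.Subgraph) {h k : V} (v : α) (hk : k ≠ h) :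
    (hcopy (H := H) A h).neighborSet (v, k) = ∅ := by
  ext z
  simp only [Subgraph.mem_neighborSet, hcopy_adj, Set.mem_empty_iff_false, iff_false]
  rintro ⟨-, h1, -⟩
  exact hk h1

lemma vcopy_nbr (w : α) (B : H.Subgraph) (v : V) :
    (vcopy (G := G) w B).neighborSet (w, v) = (fun z => (w, z)) '' B.neighborSet v := by
  ext ⟨z1, z2⟩
  simp only [Subgraph.mem_neighborSet, vcopy_adj, Set.mem_image]
  constructor
  · rintro ⟨hb, -, rfl⟩
    exact ⟨z2, hb, rfl⟩
  · rintro ⟨z, hz, hzz⟩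
    cases hzz
    exact ⟨hz, by simp, by simp⟩

lemma vcopy_nbr_ncard (w : α) (B : H.Subgraph) (v : V) :
    ((vcopy (G := G) w B).neighborSet (w, v)).ncard = (B.neighborSet v).ncard := by
  rw [vcopy_nbr]
  exact Set.ncard_image_of_injective _ (fun a b hab => (Prod.ext_iff.mp hab).2)

lemma vcopy_nbr_empty {w u : α} (B : H.Subgraph) (v : V) (hu : u ≠ w) :
    (vcopy (G := G) w B).neighborSet (u, v) = ∅ := by
  ext z
  simp only [Subgraph.mem_neighborSet, vcopy_adj, Set.mem_empty_iff_false, iff_false]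
  rintro ⟨-, h1, -⟩
  exact hu h1

/-- Iso between a subgraph and its horizontal copy. -/
def hcopyIso (A : G.Subgraph) (h : V) : A.coe ≃g (hcopy (H := H) A h).coe where
  toFun := fun v => ⟨(v.1, h), ⟨v.2, rfl⟩⟩
  invFun := fun w => ⟨w.1.1, w.2.1⟩
  left_inv := fun v => rfl
  right_inv := fun w => Subtype.ext (Prod.ext rfl w.2.2.symm)
  map_rel_iff' := by
    intro v w
    change (hcopy (H := H) A h).Adj (v.1, h) (w.1, h) ↔ A.Adj v.1 w.1
    simp [Subgraph.coe_adj]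

def vcopyIso (w : α) (B : H.Subgraph) : B.coe ≃g (vcopy (G := G) w B).coe where
  toFun := fun v => ⟨(w, v.1), ⟨rfl, v.2⟩⟩
  invFun := fun z => ⟨z.1.2, z.2.2⟩
  left_inv := fun v => rfl
  right_inv := fun z => Subtype.ext (Prod.ext z.2.1.symm rfl)
  map_rel_iff' := by
    intro v z
    change (vcopy (G := G) w B).Adj (w, v.1) (w, z.1) ↔ B.Adj v.1 z.1
    simp [Subgraph.coe_adj]

lemma hcopy_isTree {A : G.Subgraph} (hA : A.coe.IsTree) (h : V) :
    (hcopy (H := H) A h).coe.IsTree := isTree_of_iso (hcopyIso A h) hA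

lemma vcopy_isTree {B : H.Subgraph} (hB : B.coe.IsTree) (w : α) :
    (vcopy (G := G) w B).coe.IsTree := isTree_of_iso (vcopyIso w B) hB

lemma edgeDisj_of_adj {X : Type*} {K : SimpleGraph X} {T T' : K.Subgraph}
    (h : ∀ x y, T.Adj x y → T'.Adj x y → False) : T.edgeSet ∩ T'.edgeSet = ∅ := by
  ext e
  induction e with
  | _ x y =>
    simp only [Set.mem_inter_iff, Subgraph.mem_edgeSet, Set.mem_empty_iff_false, iff_false,
      not_and]
    exact h x y


section Cases
variable {α V : Type*} {G : SimpleGraph α} {H : SimpleGraph V}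

/-- The conclusion bundle for a triple of trees. -/
def Works (S : Set (α × V)) (BB W₁ W₂ W₃ : (G □ H).Subgraph) : Prop :=
  (W₁ ≤ BB ∧ W₂ ≤ BB ∧ W₃ ≤ BB) ∧
  (IsPendantSteinerTree (G □ H) S W₁ ∧ IsPendantSteinerTree (G □ H) S W₂ ∧
    IsPendantSteinerTree (G □ H) S W₃) ∧
  (InternallyDisjoint (G □ H) S W₁ W₂ ∧ InternallyDisjoint (G □ H) S W₁ W₃ ∧
    InternallyDisjoint (G □ H) S W₂ W₃)

lemma idisj_symm {X : Type*} {K : SimpleGraph X} {S : Set X} {T T' : K.Subgraph}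
    (h : InternallyDisjoint K S T T') : InternallyDisjoint K S T' T :=
  ⟨by rw [Set.inter_comm]; exact h.1, by rw [Set.inter_comm]; exact h.2⟩

lemma works_package {S : Set (α × V)} {BB : (G □ H).Subgraph}
    (h : ∃ W₁ W₂ W₃, Works S BB W₁ W₂ W₃) :
    ∃ W : Fin 3 → (G □ H).Subgraph, (∀ i, W i ≤ BB) ∧
      (∀ i, IsPendantSteinerTree (G □ H) S (W i)) ∧
      ∀ i j, i ≠ j → InternallyDisjoint (G □ H) S (W i) (W j) := by
  obtain ⟨W₁, W₂, W₃, ⟨hb1, hb2, hb3⟩, ⟨hp1, hp2, hp3⟩, ⟨hd12, hd13, hd23⟩⟩ := h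
  refine ⟨![W₁, W₂, W₃], ?_, ?_, ?_⟩
  · intro i; fin_cases i <;> assumption
  · intro i; fin_cases i <;> assumption
  · intro i j hij
    fin_cases i <;> fin_cases j <;> simp_all <;>
      first
        | exact hd12 | exact hd13 | exact hd23
        | exact idisj_symm hd12 | exact idisj_symm hd13 | exact idisj_symm hd23

lemma case_all_eq (u₁ u₂ u₃ : α) (h12 : u₁ ≠ u₂) (h13 : u₁ ≠ u₃) (h23 : u₂ ≠ u₃) (a : V)
    (T₁ T₂ : G.Subgraph)
    (hT₁ : IsPendantSteinerTree G {u₁, u₂, u₃} T₁)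
    (hT₂ : IsPendantSteinerTree G {u₁, u₂, u₃} T₂)
    (hdisj : InternallyDisjoint G {u₁, u₂, u₃} T₁ T₂)
    (U₁ U₂ : H.Subgraph)
    (hU₁ : IsPendantSteinerTree H {a} U₁) (hU₂ : IsPendantSteinerTree H {a} U₂)
    (hdisjU : InternallyDisjoint H {a} U₁ U₂) :
    ∃ W₁ W₂ W₃, Works {(u₁, a), (u₂, a), (u₃, a)} (subgraphBox (T₁ ⊔ T₂) (U₁ ⊔ U₂)) W₁ W₂ W₃ := by
  classical
  -- basic membership facts
  have hu₁T₁ : u₁ ∈ T₁.verts := hT₁.2.1 (by simp)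
  have hu₂T₁ : u₂ ∈ T₁.verts := hT₁.2.1 (by simp)
  have hu₃T₁ : u₃ ∈ T₁.verts := hT₁.2.1 (by simp)
  have hu₁T₂ : u₁ ∈ T₂.verts := hT₂.2.1 (by simp)
  have hu₂T₂ : u₂ ∈ T₂.verts := hT₂.2.1 (by simp)
  have hu₃T₂ : u₃ ∈ T₂.verts := hT₂.2.1 (by simp)
  have haU₁ : a ∈ U₁.verts := hU₁.2.1 rfl
  obtain ⟨a₁, hnbra, hadja⟩ := unique_nbr (hU₁.2.2 a rfl)
  have ha₁ : a₁ ≠ a := (U₁.adj_sub hadja).ne'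
  set E : H.Subgraph := H.subgraphOfAdj (U₁.adj_sub hadja) with hEdef
  have hEle : E ≤ U₁ := subgraphOfAdj_le hadja
  have hEverts : E.verts = {a, a₁} := rfl
  have hEtree : E.coe.IsTree := subgraphOfAdj_coe_isTree _
  have hW₃tree3 : ∀ u : α, u ∈ T₁.verts → ∀ X : (G □ H).Subgraph, True := by intro _ _ _; trivial
  refine ⟨hcopy T₁ a, hcopy T₂ a,
    hcopy T₁ a₁ ⊔ vcopy u₁ E ⊔ vcopy u₂ E ⊔ vcopy u₃ E, ?_, ?_, ?_⟩
  · -- bounds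
    refine ⟨hcopy_le_box le_sup_left (Or.inl haU₁), hcopy_le_box le_sup_right (Or.inl haU₁), ?_⟩
    have ha₁U₁ : a₁ ∈ U₁.verts := U₁.edge_vert hadja.symm
    exact sup_le (sup_le (sup_le (hcopy_le_box le_sup_left (Or.inl ha₁U₁))
      (vcopy_le_box (le_trans hEle le_sup_left) (Or.inl hu₁T₁)))
      (vcopy_le_box (le_trans hEle le_sup_left) (Or.inl hu₂T₁)))
      (vcopy_le_box (le_trans hEle le_sup_left) (Or.inl hu₃T₁))
  · -- pendant Steiner trees
    refine ⟨⟨hcopy_isTree hT₁.1 a, ?_, ?_⟩, ⟨hcopy_isTree hT₂.1 a, ?_, ?_⟩, ⟨?_, ?_, ?_⟩⟩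
    · rintro v (rfl | rfl | rfl)
      exacts [⟨hu₁T₁, rfl⟩, ⟨hu₂T₁, rfl⟩, ⟨hu₃T₁, rfl⟩]
    · rintro v (rfl | rfl | rfl) <;>
        rw [hcopy_nbr_ncard]
      exacts [hT₁.2.2 u₁ (by simp), hT₁.2.2 u₂ (by simp), hT₁.2.2 u₃ (by simp)]
    · rintro v (rfl | rfl | rfl)
      exacts [⟨hu₁T₂, rfl⟩, ⟨hu₂T₂, rfl⟩, ⟨hu₃T₂, rfl⟩]
    · rintro v (rfl | rfl | rfl) <;>
        rw [hcopy_nbr_ncard]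
      exacts [hT₂.2.2 u₁ (by simp), hT₂.2.2 u₂ (by simp), hT₂.2.2 u₃ (by simp)]
    · -- tree-ness of W₃
      refine isTree_sup (p := (u₃, a₁)) (isTree_sup (p := (u₂, a₁)) (isTree_sup (p := (u₁, a₁))
        (hcopy_isTree hT₁.1 a₁) (vcopy_isTree hEtree u₁) ?_) (vcopy_isTree hEtree u₂) ?_)
        (vcopy_isTree hEtree u₃) ?_
      · show (hcopy T₁ a₁).verts ∩ (vcopy u₁ E).verts = {(u₁, a₁)}
        ext ⟨x, k⟩
        simp only [hcopy_verts, vcopy_verts, hEverts, Set.mem_inter_iff, Set.mem_prod,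
          Set.mem_singleton_iff, Set.mem_insert_iff, Prod.mk.injEq]
        constructor
        · rintro ⟨⟨hx, rfl⟩, rfl, _⟩
          exact ⟨rfl, rfl⟩
        · rintro ⟨rfl, rfl⟩
          exact ⟨⟨hu₁T₁, rfl⟩, rfl, Or.inr rfl⟩
      · show ((hcopy T₁ a₁ ⊔ vcopy u₁ E).verts) ∩ (vcopy u₂ E).verts = {(u₂, a₁)}
        rw [Subgraph.verts_sup]
        ext ⟨x, k⟩
        simp only [hcopy_verts, vcopy_verts, hEverts, Set.mem_inter_iff, Set.mem_union,
          Set.mem_prod, Set.mem_singleton_iff, Set.mem_insert_iff, Prod.mk.injEq]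
        constructor
        · rintro ⟨⟨hx, rfl⟩ | ⟨rfl, hk⟩, rfl, hk2⟩
          · exact ⟨rfl, rfl⟩
          · exact absurd rfl h12
        · rintro ⟨rfl, rfl⟩
          exact ⟨Or.inl ⟨hu₂T₁, rfl⟩, rfl, Or.inr rfl⟩
      · show ((hcopy T₁ a₁ ⊔ vcopy u₁ E ⊔ vcopy u₂ E).verts) ∩ (vcopy u₃ E).verts = {(u₃, a₁)}
        rw [Subgraph.verts_sup, Subgraph.verts_sup]
        ext ⟨x, k⟩
        simp only [hcopy_verts, vcopy_verts, hEverts, Set.mem_inter_iff, Set.mem_union,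
          Set.mem_prod, Set.mem_singleton_iff, Set.mem_insert_iff, Prod.mk.injEq]
        constructor
        · rintro ⟨(⟨hx, rfl⟩ | ⟨rfl, hk⟩) | ⟨rfl, hk⟩, rfl, hk2⟩
          · exact ⟨rfl, rfl⟩
          · exact absurd rfl h13
          · exact absurd rfl h23
        · rintro ⟨rfl, rfl⟩
          exact ⟨Or.inl (Or.inl ⟨hu₃T₁, rfl⟩), rfl, Or.inr rfl⟩
    · -- S inside W₃
      rintro v (rfl | rfl | rfl)
      · exact Or.inl (Or.inl (Or.inr ⟨rfl, Or.inl rfl⟩))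
      · exact Or.inl (Or.inr ⟨rfl, Or.inl rfl⟩)
      · exact Or.inr ⟨rfl, Or.inl rfl⟩
    · -- degrees in W₃
      have hEnb : E.neighborSet a = {a₁} := neighborSet_fst_subgraphOfAdj _
      rintro v (rfl | rfl | rfl) <;>
        rw [Subgraph.neighborSet_sup, Subgraph.neighborSet_sup, Subgraph.neighborSet_sup,
          hcopy_nbr_empty _ _ ha₁.symm]
      · rw [vcopy_nbr_empty _ _ h12, vcopy_nbr_empty _ _ h13]
        simp only [Set.empty_union, Set.union_empty]
        rw [vcopy_nbr_ncard, hEnb]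
        exact Set.ncard_singleton _
      · rw [vcopy_nbr_empty _ _ h12.symm, vcopy_nbr_empty _ _ h23]
        simp only [Set.empty_union, Set.union_empty]
        rw [vcopy_nbr_ncard, hEnb]
        exact Set.ncard_singleton _
      · rw [vcopy_nbr_empty _ _ h13.symm, vcopy_nbr_empty _ _ h23.symm]
        simp only [Set.empty_union, Set.union_empty]
        rw [vcopy_nbr_ncard, hEnb]
        exact Set.ncard_singleton _
  · -- internal disjointness
    have hvertsTT : T₁.verts ∩ T₂.verts = {u₁, u₂, u₃} := hdisj.2
    refine ⟨⟨?_, ?_⟩, ⟨?_, ?_⟩, ⟨?_, ?_⟩⟩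
    · -- edges W₁ W₂
      apply edgeDisj_of_adj
      rintro x y ⟨h1, -, -⟩ ⟨h2, -, -⟩
      have : s(x.1, y.1) ∈ T₁.edgeSet ∩ T₂.edgeSet := ⟨h1, h2⟩
      rw [hdisj.1] at this
      exact this
    · -- verts W₁ W₂
      ext ⟨x, k⟩
      simp only [hcopy_verts, Set.mem_inter_iff, Set.mem_prod, Set.mem_singleton_iff,
        Set.mem_insert_iff, Prod.mk.injEq]
      constructor
      · rintro ⟨⟨hx1, rfl⟩, hx2, -⟩
        have : x ∈ T₁.verts ∩ T₂.verts := ⟨hx1, hx2⟩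
        rw [hvertsTT] at this
        rcases this with rfl | rfl | rfl
        · exact Or.inl ⟨rfl, rfl⟩
        · exact Or.inr (Or.inl ⟨rfl, rfl⟩)
        · exact Or.inr (Or.inr ⟨rfl, rfl⟩)
      · rintro (⟨rfl, rfl⟩ | ⟨rfl, rfl⟩ | ⟨rfl, rfl⟩)
        exacts [⟨⟨hu₁T₁, rfl⟩, hu₁T₂, rfl⟩, ⟨⟨hu₂T₁, rfl⟩, hu₂T₂, rfl⟩, ⟨⟨hu₃T₁, rfl⟩, hu₃T₂, rfl⟩]
    · -- edges W₁ W₃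
      apply edgeDisj_of_adj
      rintro x y ⟨h1, hx2, hy2⟩ (((⟨h2, hx2', hy2'⟩ | ⟨h2, hx1', hy1'⟩) | ⟨h2, hx1', hy1'⟩) |
        ⟨h2, hx1', hy1'⟩)
      · exact ha₁ (hx2'.symm.trans hx2)
      all_goals exact (E.adj_sub h2).ne (hx2.trans hy2.symm)
    · -- verts W₁ W₃
      ext ⟨x, k⟩
      simp only [Subgraph.verts_sup, hcopy_verts, vcopy_verts, hEverts, Set.mem_inter_iff,
        Set.mem_union, Set.mem_prod, Set.mem_singleton_iff, Set.mem_insert_iff, Prod.mk.injEq]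
      constructor
      · rintro ⟨⟨hx1, rfl⟩, ((⟨hx1', h'⟩ | ⟨rfl, h'⟩) | ⟨rfl, h'⟩) | ⟨rfl, h'⟩⟩
        · exact absurd h' ha₁.symm
        · exact Or.inl ⟨rfl, rfl⟩
        · exact Or.inr (Or.inl ⟨rfl, rfl⟩)
        · exact Or.inr (Or.inr ⟨rfl, rfl⟩)
      · rintro (⟨rfl, rfl⟩ | ⟨rfl, rfl⟩ | ⟨rfl, rfl⟩)
        · exact ⟨⟨hu₁T₁, rfl⟩, Or.inl (Or.inl (Or.inr ⟨rfl, Or.inl rfl⟩))⟩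
        · exact ⟨⟨hu₂T₁, rfl⟩, Or.inl (Or.inr ⟨rfl, Or.inl rfl⟩)⟩
        · exact ⟨⟨hu₃T₁, rfl⟩, Or.inr ⟨rfl, Or.inl rfl⟩⟩
    · -- edges W₂ W₃
      apply edgeDisj_of_adj
      rintro x y ⟨h1, hx2, hy2⟩ (((⟨h2, hx2', hy2'⟩ | ⟨h2, hx1', hy1'⟩) | ⟨h2, hx1', hy1'⟩) |
        ⟨h2, hx1', hy1'⟩)
      · exact ha₁ (hx2'.symm.trans hx2)
      all_goals exact (E.adj_sub h2).ne (hx2.trans hy2.symm)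
    · -- verts W₂ W₃
      ext ⟨x, k⟩
      simp only [Subgraph.verts_sup, hcopy_verts, vcopy_verts, hEverts, Set.mem_inter_iff,
        Set.mem_union, Set.mem_prod, Set.mem_singleton_iff, Set.mem_insert_iff, Prod.mk.injEq]
      constructor
      · rintro ⟨⟨hx1, rfl⟩, ((⟨hx1', h'⟩ | ⟨rfl, h'⟩) | ⟨rfl, h'⟩) | ⟨rfl, h'⟩⟩
        · exact absurd h' ha₁.symm
        · exact Or.inl ⟨rfl, rfl⟩
        · exact Or.inr (Or.inl ⟨rfl, rfl⟩)
        · exact Or.inr (Or.inr ⟨rfl, rfl⟩)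
      · rintro (⟨rfl, rfl⟩ | ⟨rfl, rfl⟩ | ⟨rfl, rfl⟩)
        · exact ⟨⟨hu₁T₂, rfl⟩, Or.inl (Or.inl (Or.inr ⟨rfl, Or.inl rfl⟩))⟩
        · exact ⟨⟨hu₂T₂, rfl⟩, Or.inl (Or.inr ⟨rfl, Or.inl rfl⟩)⟩
        · exact ⟨⟨hu₃T₂, rfl⟩, Or.inr ⟨rfl, Or.inl rfl⟩⟩

lemma case_distinct (u₁ u₂ u₃ : α) (h12 : u₁ ≠ u₂) (h13 : u₁ ≠ u₃) (h23 : u₂ ≠ u₃)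
    (a b c : V) (hab : a ≠ b) (hac : a ≠ c) (hbc : b ≠ c)
    (T₁ T₂ : G.Subgraph)
    (hT₁ : IsPendantSteinerTree G {u₁, u₂, u₃} T₁)
    (hT₂ : IsPendantSteinerTree G {u₁, u₂, u₃} T₂)
    (hdisj : InternallyDisjoint G {u₁, u₂, u₃} T₁ T₂)
    (U₁ U₂ : H.Subgraph)
    (hU₁ : IsPendantSteinerTree H {a, b, c} U₁) (hU₂ : IsPendantSteinerTree H {a, b, c} U₂)
    (hdisjU : InternallyDisjoint H {a, b, c} U₁ U₂) :
    ∃ W₁ W₂ W₃, Works {(u₁, a), (u₂, b), (u₃, c)} (subgraphBox (T₁ ⊔ T₂) (U₁ ⊔ U₂)) W₁ W₂ W₃ := by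
  classical
  have hu₁T₁ : u₁ ∈ T₁.verts := hT₁.2.1 (by simp)
  have hu₂T₁ : u₂ ∈ T₁.verts := hT₁.2.1 (by simp)
  have hu₃T₁ : u₃ ∈ T₁.verts := hT₁.2.1 (by simp)
  have hu₁T₂ : u₁ ∈ T₂.verts := hT₂.2.1 (by simp)
  have hu₂T₂ : u₂ ∈ T₂.verts := hT₂.2.1 (by simp)
  have hu₃T₂ : u₃ ∈ T₂.verts := hT₂.2.1 (by simp)
  have haU₁ : a ∈ U₁.verts := hU₁.2.1 (by simp)
  have hbU₁ : b ∈ U₁.verts := hU₁.2.1 (by simp)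
  have hcU₁ : c ∈ U₁.verts := hU₁.2.1 (by simp)
  have haU₂ : a ∈ U₂.verts := hU₂.2.1 (by simp)
  have hbU₂ : b ∈ U₂.verts := hU₂.2.1 (by simp)
  have hcU₂ : c ∈ U₂.verts := hU₂.2.1 (by simp)
  have hda : (U₂.neighborSet a).ncard = 1 := hU₂.2.2 a (by simp)
  have hdb : (U₂.neighborSet b).ncard = 1 := hU₂.2.2 b (by simp)
  have hdc : (U₂.neighborSet c).ncard = 1 := hU₂.2.2 c (by simp)
  obtain ⟨a₂, hnbra, hadja⟩ := unique_nbr hda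
  have ha₂a : a₂ ≠ a := (U₂.adj_sub hadja).ne'
  have ha₂b : a₂ ≠ b := by
    rintro rfl
    exact not_adj_of_leaves hU₂.1 hda hdb hcU₂ hac.symm hbc.symm hadja
  have ha₂c : a₂ ≠ c := by
    rintro rfl
    exact not_adj_of_leaves hU₂.1 hda hdc hbU₂ hab.symm hbc hadja
  have ha₂U₂ : a₂ ∈ U₂.verts := U₂.edge_vert hadja.symm
  have ha₂U₁ : a₂ ∉ U₁.verts := by
    intro hmem
    have : a₂ ∈ U₁.verts ∩ U₂.verts := ⟨hmem, ha₂U₂⟩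
    rw [hdisjU.2] at this
    rcases this with h | h | h
    exacts [ha₂a h, ha₂b h, ha₂c h]
  set E : H.Subgraph := H.subgraphOfAdj (U₂.adj_sub hadja) with hEdef
  have hEle : E ≤ U₂ := subgraphOfAdj_le hadja
  have hEverts : E.verts = {a, a₂} := rfl
  have hEtree : E.coe.IsTree := subgraphOfAdj_coe_isTree _
  -- paths
  obtain ⟨Pab, hPab_le, hPab_tree, haPab, hbPab, hPab_da, hPab_db, hPab_mid⟩ :=
    exists_path_subgraph U₁ hU₁.1 haU₁ hbU₁ hab
  obtain ⟨Pac, hPac_le, hPac_tree, haPac, hcPac, hPac_da, hPac_dc, hPac_mid⟩ :=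
    exists_path_subgraph U₁ hU₁.1 haU₁ hcU₁ hac
  obtain ⟨P₁₂, hP₁₂_le, hP₁₂_tree, hu₁P₁₂, hu₂P₁₂, hP₁₂_d1, hP₁₂_d2, hP₁₂_mid⟩ :=
    exists_path_subgraph T₁ hT₁.1 hu₁T₁ hu₂T₁ h12
  obtain ⟨P₁₃, hP₁₃_le, hP₁₃_tree, hu₁P₁₃, hu₃P₁₃, hP₁₃_d1, hP₁₃_d3, hP₁₃_mid⟩ :=
    exists_path_subgraph T₁ hT₁.1 hu₁T₁ hu₃T₁ h13
  obtain ⟨Qb, hQb_le, hQb_tree, ha₂Qb, hbQb, hQb_da, hQb_db, hQb_mid⟩ :=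
    exists_path_subgraph U₂ hU₂.1 ha₂U₂ hbU₂ ha₂b
  obtain ⟨Qc, hQc_le, hQc_tree, ha₂Qc, hcQc, hQc_da, hQc_dc, hQc_mid⟩ :=
    exists_path_subgraph U₂ hU₂.1 ha₂U₂ hcU₂ ha₂c
  -- exclusion facts
  have hcPab : c ∉ Pab.verts :=
    leaf_not_mem_path hPab_le hPab_mid (hU₁.2.2 c (by simp)) hac.symm hbc.symm
  have hbPac : b ∉ Pac.verts :=
    leaf_not_mem_path hPac_le hPac_mid (hU₁.2.2 b (by simp)) hab.symm hbc
  have hu₃P₁₂ : u₃ ∉ P₁₂.verts :=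
    leaf_not_mem_path hP₁₂_le hP₁₂_mid (hT₁.2.2 u₃ (by simp)) h13.symm h23.symm
  have hu₂P₁₃ : u₂ ∉ P₁₃.verts :=
    leaf_not_mem_path hP₁₃_le hP₁₃_mid (hT₁.2.2 u₂ (by simp)) h12.symm h23
  have haQb : a ∉ Qb.verts := leaf_not_mem_path hQb_le hQb_mid hda ha₂a.symm hab
  have haQc : a ∉ Qc.verts := leaf_not_mem_path hQc_le hQc_mid hda ha₂a.symm hac
  have hcQb : c ∉ Qb.verts := leaf_not_mem_path hQb_le hQb_mid hdc ha₂c.symm hbc.symm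
  have hbQc : b ∉ Qc.verts := leaf_not_mem_path hQc_le hQc_mid hdb ha₂b.symm hbc
  have ha₂Pab : a₂ ∉ Pab.verts := fun hm => ha₂U₁ (hPab_le.1 hm)
  have ha₂Pac : a₂ ∉ Pac.verts := fun hm => ha₂U₁ (hPac_le.1 hm)
  refine ⟨hcopy T₁ a ⊔ vcopy u₂ Pab ⊔ vcopy u₃ Pac,
    vcopy u₁ U₁ ⊔ hcopy P₁₂ b ⊔ hcopy P₁₃ c,
    hcopy T₂ a₂ ⊔ vcopy u₁ E ⊔ vcopy u₂ Qb ⊔ vcopy u₃ Qc, ?_, ?_, ?_⟩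
  · refine ⟨?_, ?_, ?_⟩
    · exact sup_le (sup_le (hcopy_le_box le_sup_left (Or.inl haU₁))
        (vcopy_le_box (le_trans hPab_le le_sup_left) (Or.inl hu₂T₁)))
        (vcopy_le_box (le_trans hPac_le le_sup_left) (Or.inl hu₃T₁))
    · exact sup_le (sup_le (vcopy_le_box le_sup_left (Or.inl hu₁T₁))
        (hcopy_le_box (le_trans hP₁₂_le le_sup_left) (Or.inl hbU₁)))
        (hcopy_le_box (le_trans hP₁₃_le le_sup_left) (Or.inl hcU₁))
    · exact sup_le (sup_le (sup_le (hcopy_le_box le_sup_right (Or.inr ha₂U₂))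
        (vcopy_le_box (le_trans hEle le_sup_right) (Or.inl hu₁T₁)))
        (vcopy_le_box (le_trans hQb_le le_sup_right) (Or.inl hu₂T₁)))
        (vcopy_le_box (le_trans hQc_le le_sup_right) (Or.inl hu₃T₁))
  · refine ⟨⟨?_, ?_, ?_⟩, ⟨?_, ?_, ?_⟩, ⟨?_, ?_, ?_⟩⟩
    · -- W₁ tree
      refine isTree_sup (p := (u₃, a)) (isTree_sup (p := (u₂, a)) (hcopy_isTree hT₁.1 a)
        (vcopy_isTree hPab_tree u₂) ?_) (vcopy_isTree hPac_tree u₃) ?_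
      · ext ⟨x, k⟩
        simp only [hcopy_verts, vcopy_verts, Set.mem_inter_iff, Set.mem_prod,
          Set.mem_singleton_iff, Prod.mk.injEq]
        constructor
        · rintro ⟨⟨hx, rfl⟩, rfl, hk⟩
          exact ⟨rfl, rfl⟩
        · rintro ⟨rfl, rfl⟩
          exact ⟨⟨hu₂T₁, rfl⟩, rfl, haPab⟩
      · rw [Subgraph.verts_sup]
        ext ⟨x, k⟩
        simp only [hcopy_verts, vcopy_verts, Set.mem_inter_iff, Set.mem_union, Set.mem_prod,
          Set.mem_singleton_iff, Prod.mk.injEq]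
        constructor
        · rintro ⟨⟨hx, rfl⟩ | ⟨rfl, hk⟩, rfl, hk2⟩
          · exact ⟨rfl, rfl⟩
          · exact absurd rfl h23
        · rintro ⟨rfl, rfl⟩
          exact ⟨Or.inl ⟨hu₃T₁, rfl⟩, rfl, haPac⟩
    · rintro v (rfl | rfl | rfl)
      · exact Or.inl (Or.inl ⟨hu₁T₁, rfl⟩)
      · exact Or.inl (Or.inr ⟨rfl, hbPab⟩)
      · exact Or.inr ⟨rfl, hcPac⟩
    · rintro v (rfl | rfl | rfl)
      · rw [Subgraph.neighborSet_sup, Subgraph.neighborSet_sup,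
          vcopy_nbr_empty _ _ h12, vcopy_nbr_empty _ _ h13]
        simp only [Set.union_empty]
        rw [hcopy_nbr_ncard]
        exact hT₁.2.2 u₁ (by simp)
      · rw [Subgraph.neighborSet_sup, Subgraph.neighborSet_sup,
          hcopy_nbr_empty _ _ hab.symm, vcopy_nbr_empty _ _ h23]
        simp only [Set.empty_union, Set.union_empty]
        rw [vcopy_nbr_ncard]
        exact hPab_db
      · rw [Subgraph.neighborSet_sup, Subgraph.neighborSet_sup,
          hcopy_nbr_empty _ _ hac.symm, vcopy_nbr_empty _ _ h23.symm]
        simp only [Set.empty_union]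
        rw [vcopy_nbr_ncard]
        exact hPac_dc
    · -- W₂ tree
      refine isTree_sup (p := (u₁, c)) (isTree_sup (p := (u₁, b)) (vcopy_isTree hU₁.1 u₁)
        (hcopy_isTree hP₁₂_tree b) ?_) (hcopy_isTree hP₁₃_tree c) ?_
      · ext ⟨x, k⟩
        simp only [hcopy_verts, vcopy_verts, Set.mem_inter_iff, Set.mem_prod,
          Set.mem_singleton_iff, Prod.mk.injEq]
        constructor
        · rintro ⟨⟨rfl, hk⟩, hx, rfl⟩
          exact ⟨rfl, rfl⟩
        · rintro ⟨rfl, rfl⟩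
          exact ⟨⟨rfl, hbU₁⟩, hu₁P₁₂, rfl⟩
      · rw [Subgraph.verts_sup]
        ext ⟨x, k⟩
        simp only [hcopy_verts, vcopy_verts, Set.mem_inter_iff, Set.mem_union, Set.mem_prod,
          Set.mem_singleton_iff, Prod.mk.injEq]
        constructor
        · rintro ⟨⟨rfl, hk⟩ | ⟨hx, rfl⟩, hx2, rfl⟩
          · exact ⟨rfl, rfl⟩
          · exact absurd rfl hbc
        · rintro ⟨rfl, rfl⟩
          exact ⟨Or.inl ⟨rfl, hcU₁⟩, hu₁P₁₃, rfl⟩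
    · rintro v (rfl | rfl | rfl)
      · exact Or.inl (Or.inl ⟨rfl, haU₁⟩)
      · exact Or.inl (Or.inr ⟨hu₂P₁₂, rfl⟩)
      · exact Or.inr ⟨hu₃P₁₃, rfl⟩
    · rintro v (rfl | rfl | rfl)
      · rw [Subgraph.neighborSet_sup, Subgraph.neighborSet_sup,
          hcopy_nbr_empty _ _ hab, hcopy_nbr_empty _ _ hac]
        simp only [Set.union_empty]
        rw [vcopy_nbr_ncard]
        exact hU₁.2.2 a (by simp)
      · rw [Subgraph.neighborSet_sup, Subgraph.neighborSet_sup,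
          vcopy_nbr_empty _ _ h12.symm, hcopy_nbr_empty _ _ hbc]
        simp only [Set.empty_union, Set.union_empty]
        rw [hcopy_nbr_ncard]
        exact hP₁₂_d2
      · rw [Subgraph.neighborSet_sup, Subgraph.neighborSet_sup,
          vcopy_nbr_empty _ _ h13.symm, hcopy_nbr_empty _ _ hbc.symm]
        simp only [Set.empty_union]
        rw [hcopy_nbr_ncard]
        exact hP₁₃_d3
    · -- W₃ tree
      refine isTree_sup (p := (u₃, a₂)) (isTree_sup (p := (u₂, a₂)) (isTree_sup (p := (u₁, a₂))
        (hcopy_isTree hT₂.1 a₂) (vcopy_isTree hEtree u₁) ?_) (vcopy_isTree hQb_tree u₂) ?_)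
        (vcopy_isTree hQc_tree u₃) ?_
      · ext ⟨x, k⟩
        simp only [hcopy_verts, vcopy_verts, hEverts, Set.mem_inter_iff, Set.mem_prod,
          Set.mem_singleton_iff, Set.mem_insert_iff, Prod.mk.injEq]
        constructor
        · rintro ⟨⟨hx, rfl⟩, rfl, hk⟩
          exact ⟨rfl, rfl⟩
        · rintro ⟨rfl, rfl⟩
          exact ⟨⟨hu₁T₂, rfl⟩, rfl, Or.inr rfl⟩
      · rw [Subgraph.verts_sup]
        ext ⟨x, k⟩
        simp only [hcopy_verts, vcopy_verts, hEverts, Set.mem_inter_iff, Set.mem_union,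
          Set.mem_prod, Set.mem_singleton_iff, Set.mem_insert_iff, Prod.mk.injEq]
        constructor
        · rintro ⟨⟨hx, rfl⟩ | ⟨rfl, hk⟩, rfl, hk2⟩
          · exact ⟨rfl, rfl⟩
          · exact absurd rfl h12
        · rintro ⟨rfl, rfl⟩
          exact ⟨Or.inl ⟨hu₂T₂, rfl⟩, rfl, ha₂Qb⟩
      · rw [Subgraph.verts_sup, Subgraph.verts_sup]
        ext ⟨x, k⟩
        simp only [hcopy_verts, vcopy_verts, hEverts, Set.mem_inter_iff, Set.mem_union,
          Set.mem_prod, Set.mem_singleton_iff, Set.mem_insert_iff, Prod.mk.injEq]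
        constructor
        · rintro ⟨(⟨hx, rfl⟩ | ⟨rfl, hk⟩) | ⟨rfl, hk⟩, rfl, hk2⟩
          · exact ⟨rfl, rfl⟩
          · exact absurd rfl h13
          · exact absurd rfl h23
        · rintro ⟨rfl, rfl⟩
          exact ⟨Or.inl (Or.inl ⟨hu₃T₂, rfl⟩), rfl, ha₂Qc⟩
    · rintro v (rfl | rfl | rfl)
      · exact Or.inl (Or.inl (Or.inr ⟨rfl, Or.inl rfl⟩))
      · exact Or.inl (Or.inr ⟨rfl, hbQb⟩)
      · exact Or.inr ⟨rfl, hcQc⟩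
    · have hEnb : E.neighborSet a = {a₂} := neighborSet_fst_subgraphOfAdj _
      rintro v (rfl | rfl | rfl)
      · rw [Subgraph.neighborSet_sup, Subgraph.neighborSet_sup, Subgraph.neighborSet_sup,
          hcopy_nbr_empty _ _ ha₂a.symm, vcopy_nbr_empty _ _ h12, vcopy_nbr_empty _ _ h13]
        simp only [Set.empty_union, Set.union_empty]
        rw [vcopy_nbr_ncard, hEnb]
        exact Set.ncard_singleton _
      · rw [Subgraph.neighborSet_sup, Subgraph.neighborSet_sup, Subgraph.neighborSet_sup,
          hcopy_nbr_empty _ _ ha₂b.symm, vcopy_nbr_empty _ _ h12.symm,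
          vcopy_nbr_empty _ _ h23]
        simp only [Set.empty_union, Set.union_empty]
        rw [vcopy_nbr_ncard]
        exact hQb_db
      · rw [Subgraph.neighborSet_sup, Subgraph.neighborSet_sup, Subgraph.neighborSet_sup,
          hcopy_nbr_empty _ _ ha₂c.symm, vcopy_nbr_empty _ _ h13.symm,
          vcopy_nbr_empty _ _ h23.symm]
        simp only [Set.empty_union]
        rw [vcopy_nbr_ncard]
        exact hQc_dc
  · -- disjointness
    have hTT : T₁.verts ∩ T₂.verts = {u₁, u₂, u₃} := hdisj.2
    have hUU : U₁.verts ∩ U₂.verts = {a, b, c} := hdisjU.2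
    refine ⟨⟨?_, ?_⟩, ⟨?_, ?_⟩, ⟨?_, ?_⟩⟩
    · -- edges W₁ W₂
      apply edgeDisj_of_adj
      rintro x y ((⟨h1, hx2, hy2⟩ | ⟨h1, hx1, hy1⟩) | ⟨h1, hx1, hy1⟩)
        ((⟨h2, hx1', hy1'⟩ | ⟨h2, hx2', hy2'⟩) | ⟨h2, hx2', hy2'⟩)
      · exact (U₁.adj_sub h2).ne (hx2.trans hy2.symm)
      · exact hab (hx2.symm.trans hx2')
      · exact hac (hx2.symm.trans hx2')
      · exact h12 (hx1'.symm.trans hx1)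
      · exact (G.ne_of_adj (T₁.adj_sub (hP₁₂_le.2 h2))) (hx1.trans hy1.symm)
      · exact (G.ne_of_adj (T₁.adj_sub (hP₁₃_le.2 h2))) (hx1.trans hy1.symm)
      · exact h13 (hx1'.symm.trans hx1)
      · exact (G.ne_of_adj (T₁.adj_sub (hP₁₂_le.2 h2))) (hx1.trans hy1.symm)
      · exact (G.ne_of_adj (T₁.adj_sub (hP₁₃_le.2 h2))) (hx1.trans hy1.symm)
    · -- verts W₁ W₂
      ext ⟨x, k⟩
      simp only [Subgraph.verts_sup, hcopy_verts, vcopy_verts, Set.mem_inter_iff, Set.mem_union,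
        Set.mem_prod, Set.mem_singleton_iff, Set.mem_insert_iff, Prod.mk.injEq]
      constructor
      · rintro ⟨(⟨hx, rfl⟩ | ⟨rfl, hk⟩) | ⟨rfl, hk⟩, (⟨rfl, hk'⟩ | ⟨hx', rfl⟩) | ⟨hx', rfl⟩⟩
        · exact Or.inl ⟨rfl, rfl⟩
        · exact absurd rfl hab
        · exact absurd rfl hac
        · exact absurd rfl h12.symm
        · exact Or.inr (Or.inl ⟨rfl, rfl⟩)
        · exact absurd hk hcPab
        · exact absurd rfl h13.symm
        · exact absurd hx' hu₃P₁₂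
        · exact Or.inr (Or.inr ⟨rfl, rfl⟩)
      · rintro (⟨rfl, rfl⟩ | ⟨rfl, rfl⟩ | ⟨rfl, rfl⟩)
        · exact ⟨Or.inl (Or.inl ⟨hu₁T₁, rfl⟩), Or.inl (Or.inl ⟨rfl, haU₁⟩)⟩
        · exact ⟨Or.inl (Or.inr ⟨rfl, hbPab⟩), Or.inl (Or.inr ⟨hu₂P₁₂, rfl⟩)⟩
        · exact ⟨Or.inr ⟨rfl, hcPac⟩, Or.inr ⟨hu₃P₁₃, rfl⟩⟩
    · -- edges W₁ W₃
      apply edgeDisj_of_adj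
      rintro x y ((⟨h1, hx2, hy2⟩ | ⟨h1, hx1, hy1⟩) | ⟨h1, hx1, hy1⟩)
        (((⟨h2, hx2', hy2'⟩ | ⟨h2, hx1', hy1'⟩) | ⟨h2, hx1', hy1'⟩) | ⟨h2, hx1', hy1'⟩)
      · exact ha₂a (hx2'.symm.trans hx2)
      · exact (E.adj_sub h2).ne (hx2.trans hy2.symm)
      · exact (U₂.adj_sub (hQb_le.2 h2)).ne (hx2.trans hy2.symm)
      · exact (U₂.adj_sub (hQc_le.2 h2)).ne (hx2.trans hy2.symm)
      · exact (G.ne_of_adj (T₂.adj_sub h2)) (hx1.trans hy1.symm)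
      · exact h12.symm (hx1.symm.trans hx1')
      · have : s(x.2, y.2) ∈ U₁.edgeSet ∩ U₂.edgeSet :=
          ⟨Subgraph.edgeSet_mono hPab_le (Subgraph.mem_edgeSet.mpr h1),
           Subgraph.edgeSet_mono hQb_le (Subgraph.mem_edgeSet.mpr h2)⟩
        rw [hdisjU.1] at this
        exact this
      · exact h23 (hx1.symm.trans hx1')
      · exact (G.ne_of_adj (T₂.adj_sub h2)) (hx1.trans hy1.symm)
      · exact h13.symm (hx1.symm.trans hx1')
      · exact h23.symm (hx1.symm.trans hx1')
      · have : s(x.2, y.2) ∈ U₁.edgeSet ∩ U₂.edgeSet :=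
          ⟨Subgraph.edgeSet_mono hPac_le (Subgraph.mem_edgeSet.mpr h1),
           Subgraph.edgeSet_mono hQc_le (Subgraph.mem_edgeSet.mpr h2)⟩
        rw [hdisjU.1] at this
        exact this
    · -- verts W₁ W₃
      ext ⟨x, k⟩
      simp only [Subgraph.verts_sup, hcopy_verts, vcopy_verts, hEverts, Set.mem_inter_iff,
        Set.mem_union, Set.mem_prod, Set.mem_singleton_iff, Set.mem_insert_iff, Prod.mk.injEq]
      constructor
      · rintro ⟨(⟨hx, rfl⟩ | ⟨hx2, hk⟩) | ⟨hx3, hk⟩,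
          ((⟨hx', hk'⟩ | ⟨hx1', hk'⟩) | ⟨hx1', hk'⟩) | ⟨hx1', hk'⟩⟩
        · exact absurd hk'.symm ha₂a
        · rcases hk' with hk' | hk'
          · exact Or.inl ⟨hx1', hk'⟩
          · exact absurd hk'.symm ha₂a
        · exact absurd hk' haQb
        · exact absurd hk' haQc
        · exact absurd (hk' ▸ hk) ha₂Pab
        · rcases hk' with rfl | rfl
          · exact absurd (hx1'.symm.trans hx2) h12
          · exact absurd hk ha₂Pab
        · have hkin : k ∈ U₁.verts ∩ U₂.verts := ⟨hPab_le.1 hk, hQb_le.1 hk'⟩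
          rw [hUU] at hkin
          rcases hkin with rfl | rfl | rfl
          · exact absurd hk' haQb
          · exact Or.inr (Or.inl ⟨hx2, rfl⟩)
          · exact absurd hk hcPab
        · exact absurd (hx2.symm.trans hx1') h23
        · exact absurd (hk' ▸ hk) ha₂Pac
        · rcases hk' with rfl | rfl
          · exact absurd (hx1'.symm.trans hx3) h13
          · exact absurd hk ha₂Pac
        · exact absurd (hx1'.symm.trans hx3) h23
        · have hkin : k ∈ U₁.verts ∩ U₂.verts := ⟨hPac_le.1 hk, hQc_le.1 hk'⟩
          rw [hUU] at hkin
          rcases hkin with rfl | rfl | rfl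
          · exact absurd hk' haQc
          · exact absurd hk hbPac
          · exact Or.inr (Or.inr ⟨hx3, rfl⟩)
      · rintro (⟨rfl, rfl⟩ | ⟨rfl, rfl⟩ | ⟨rfl, rfl⟩)
        · exact ⟨Or.inl (Or.inl ⟨hu₁T₁, rfl⟩), Or.inl (Or.inl (Or.inr ⟨rfl, Or.inl rfl⟩))⟩
        · exact ⟨Or.inl (Or.inr ⟨rfl, hbPab⟩), Or.inl (Or.inr ⟨rfl, hbQb⟩)⟩
        · exact ⟨Or.inr ⟨rfl, hcPac⟩, Or.inr ⟨rfl, hcQc⟩⟩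
    · -- edges W₂ W₃
      apply edgeDisj_of_adj
      rintro x y ((⟨h1, hx1, hy1⟩ | ⟨h1, hx2, hy2⟩) | ⟨h1, hx2, hy2⟩)
        (((⟨h2, hx2', hy2'⟩ | ⟨h2, hx1', hy1'⟩) | ⟨h2, hx1', hy1'⟩) | ⟨h2, hx1', hy1'⟩)
      · exact (U₁.adj_sub h1).ne (hx2'.trans hy2'.symm)
      · have : s(x.2, y.2) ∈ U₁.edgeSet ∩ U₂.edgeSet :=
          ⟨Subgraph.mem_edgeSet.mpr h1,
           Subgraph.edgeSet_mono hEle (Subgraph.mem_edgeSet.mpr h2)⟩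
        rw [hdisjU.1] at this
        exact this
      · exact h12 (hx1.symm.trans hx1')
      · exact h13 (hx1.symm.trans hx1')
      · exact ha₂b (hx2'.symm.trans hx2)
      · exact (E.adj_sub h2).ne (hx2.trans hy2.symm)
      · exact (U₂.adj_sub (hQb_le.2 h2)).ne (hx2.trans hy2.symm)
      · exact (U₂.adj_sub (hQc_le.2 h2)).ne (hx2.trans hy2.symm)
      · exact ha₂c (hx2'.symm.trans hx2)
      · exact (E.adj_sub h2).ne (hx2.trans hy2.symm)
      · exact (U₂.adj_sub (hQb_le.2 h2)).ne (hx2.trans hy2.symm)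
      · exact (U₂.adj_sub (hQc_le.2 h2)).ne (hx2.trans hy2.symm)
    · -- verts W₂ W₃
      ext ⟨x, k⟩
      simp only [Subgraph.verts_sup, hcopy_verts, vcopy_verts, hEverts, Set.mem_inter_iff,
        Set.mem_union, Set.mem_prod, Set.mem_singleton_iff, Set.mem_insert_iff, Prod.mk.injEq]
      constructor
      · rintro ⟨(⟨hx1, hk⟩ | ⟨hx, rfl⟩) | ⟨hx, rfl⟩,
          ((⟨hx', hk'⟩ | ⟨hx1', hk'⟩) | ⟨hx1', hk'⟩) | ⟨hx1', hk'⟩⟩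
        · exact absurd (hk' ▸ hk) ha₂U₁
        · rcases hk' with rfl | rfl
          · exact Or.inl ⟨hx1, rfl⟩
          · exact absurd hk ha₂U₁
        · exact absurd (hx1.symm.trans hx1') h12
        · exact absurd (hx1.symm.trans hx1') h13
        · exact absurd hk'.symm ha₂b
        · rcases hk' with rfl | rfl
          · exact absurd rfl hab.symm
          · exact absurd rfl ha₂b.symm
        · exact Or.inr (Or.inl ⟨hx1', rfl⟩)
        · exact absurd (hx1' ▸ hx) hu₃P₁₂
        · exact absurd hk'.symm ha₂c
        · rcases hk' with rfl | rfl
          · exact absurd rfl hac.symm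
          · exact absurd rfl ha₂c.symm
        · exact absurd (hx1' ▸ hx) hu₂P₁₃
        · exact Or.inr (Or.inr ⟨hx1', rfl⟩)
      · rintro (⟨rfl, rfl⟩ | ⟨rfl, rfl⟩ | ⟨rfl, rfl⟩)
        · exact ⟨Or.inl (Or.inl ⟨rfl, haU₁⟩), Or.inl (Or.inl (Or.inr ⟨rfl, Or.inl rfl⟩))⟩
        · exact ⟨Or.inl (Or.inr ⟨hu₂P₁₂, rfl⟩), Or.inl (Or.inr ⟨rfl, hbQb⟩)⟩
        · exact ⟨Or.inr ⟨hu₃P₁₃, rfl⟩, Or.inr ⟨rfl, hcQc⟩⟩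

lemma case_two_core (v₁ v₂ v₃ : α) (h12 : v₁ ≠ v₂) (h13 : v₁ ≠ v₃) (h23 : v₂ ≠ v₃)
    (p q : V) (hpq : p ≠ q)
    (T₁ T₂ : G.Subgraph)
    (hT₁ : IsPendantSteinerTree G {v₁, v₂, v₃} T₁)
    (hT₂ : IsPendantSteinerTree G {v₁, v₂, v₃} T₂)
    (hdisj : InternallyDisjoint G {v₁, v₂, v₃} T₁ T₂)
    (U₁ U₂ : H.Subgraph)
    (hU₁ : IsPendantSteinerTree H {p, q} U₁) (hU₂ : IsPendantSteinerTree H {p, q} U₂)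
    (hUUv : U₁.verts ∩ U₂.verts = {p, q}) (hUUe : U₁.edgeSet ∩ U₂.edgeSet = ∅)
    (d : V) (hadjd : U₂.Adj p d) (hdq : d ≠ q) :
    ∃ W₁ W₂ W₃, Works {(v₁, p), (v₂, p), (v₃, q)} (subgraphBox (T₁ ⊔ T₂) (U₁ ⊔ U₂)) W₁ W₂ W₃ := by
  classical
  have hv₁T₁ : v₁ ∈ T₁.verts := hT₁.2.1 (by simp)
  have hv₂T₁ : v₂ ∈ T₁.verts := hT₁.2.1 (by simp)
  have hv₃T₁ : v₃ ∈ T₁.verts := hT₁.2.1 (by simp)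
  have hv₁T₂ : v₁ ∈ T₂.verts := hT₂.2.1 (by simp)
  have hv₂T₂ : v₂ ∈ T₂.verts := hT₂.2.1 (by simp)
  have hv₃T₂ : v₃ ∈ T₂.verts := hT₂.2.1 (by simp)
  have hpU₁ : p ∈ U₁.verts := hU₁.2.1 (by simp)
  have hqU₁ : q ∈ U₁.verts := hU₁.2.1 (by simp)
  have hpU₂ : p ∈ U₂.verts := hU₂.2.1 (by simp)
  have hqU₂ : q ∈ U₂.verts := hU₂.2.1 (by simp)
  have hdp : d ≠ p := (U₂.adj_sub hadjd).ne'
  have hdU₂ : d ∈ U₂.verts := U₂.edge_vert hadjd.symm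
  have hdU₁ : d ∉ U₁.verts := by
    intro hmem
    have : d ∈ U₁.verts ∩ U₂.verts := ⟨hmem, hdU₂⟩
    rw [hUUv] at this
    rcases this with h | h
    exacts [hdp h, hdq h]
  -- the G-side neighbour w of v₁ in T₂
  obtain ⟨w, hnbrw, hadjw⟩ := unique_nbr (hT₂.2.2 v₁ (by simp))
  have hw1 : w ≠ v₁ := (T₂.adj_sub hadjw).ne'
  have hw2 : w ≠ v₂ := by
    rintro rfl
    exact not_adj_of_leaves hT₂.1 (hT₂.2.2 v₁ (by simp)) (hT₂.2.2 w (by simp)) hv₃T₂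
      h13.symm h23.symm hadjw
  have hw3 : w ≠ v₃ := by
    rintro rfl
    exact not_adj_of_leaves hT₂.1 (hT₂.2.2 v₁ (by simp)) (hT₂.2.2 w (by simp)) hv₂T₂
      h12.symm h23 hadjw
  have hwT₂ : w ∈ T₂.verts := T₂.edge_vert hadjw.symm
  have hwT₁ : w ∉ T₁.verts := by
    intro hmem
    have : w ∈ T₁.verts ∩ T₂.verts := ⟨hmem, hwT₂⟩
    rw [hdisj.2] at this
    rcases this with h | h | h
    exacts [hw1 h, hw2 h, hw3 h]
  set E : H.Subgraph := H.subgraphOfAdj (U₂.adj_sub hadjd) with hEdef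
  have hEle : E ≤ U₂ := subgraphOfAdj_le hadjd
  have hEverts : E.verts = {p, d} := rfl
  have hEtree : E.coe.IsTree := subgraphOfAdj_coe_isTree _
  -- paths
  obtain ⟨R, hR_le, hR_tree, hpR, hqR, hR_dp, hR_dq, hR_mid⟩ :=
    exists_path_subgraph U₁ hU₁.1 hpU₁ hqU₁ hpq
  obtain ⟨Q', hQ_le, hQ_tree, hdQ, hqQ, hQ_dd, hQ_dq, hQ_mid⟩ :=
    exists_path_subgraph U₂ hU₂.1 hdU₂ hqU₂ hdq
  obtain ⟨P, hP_le, hP_tree, hv₁P, hv₂P, hP_d1, hP_d2, hP_mid⟩ :=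
    exists_path_subgraph T₂ hT₂.1 hv₁T₂ hv₂T₂ h12
  obtain ⟨P'', hP''_le, hP''_tree, hwP'', hv₃P'', hP''_dw, hP''_d3, hP''_mid⟩ :=
    exists_path_subgraph T₂ hT₂.1 hwT₂ hv₃T₂ (by exact fun h => hw3 h)
  -- w lies on P
  have hwP : w ∈ P.verts := by
    obtain ⟨w', hw', hadj'⟩ := unique_nbr hP_d1
    have hww' : w' = w := by
      have : w' ∈ T₂.neighborSet v₁ :=
        Subgraph.neighborSet_subset_of_subgraph hP_le v₁ (by rw [hw']; rfl)
      rw [hnbrw] at this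
      exact this
    subst hww'
    exact P.edge_vert hadj'.symm
  -- exclusions
  have hpQ : p ∉ Q'.verts := leaf_not_mem_path hQ_le hQ_mid (hU₂.2.2 p (by simp)) hdp.symm hpq
  have hv₃P : v₃ ∉ P.verts :=
    leaf_not_mem_path hP_le hP_mid (hT₂.2.2 v₃ (by simp)) h13.symm h23.symm
  have hv₁P'' : v₁ ∉ P''.verts :=
    leaf_not_mem_path hP''_le hP''_mid (hT₂.2.2 v₁ (by simp)) hw1.symm h13
  have hv₂P'' : v₂ ∉ P''.verts :=
    leaf_not_mem_path hP''_le hP''_mid (hT₂.2.2 v₂ (by simp)) hw2.symm h23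
  have hdR : d ∉ R.verts := fun hm => hdU₁ (hR_le.1 hm)
  refine ⟨hcopy T₁ p ⊔ vcopy v₃ R,
    hcopy T₂ d ⊔ vcopy v₁ E ⊔ vcopy v₂ E ⊔ vcopy v₃ Q',
    hcopy P p ⊔ vcopy w R ⊔ hcopy P'' q, ?_, ?_, ?_⟩
  · refine ⟨?_, ?_, ?_⟩
    · exact sup_le (hcopy_le_box le_sup_left (Or.inl hpU₁))
        (vcopy_le_box (le_trans hR_le le_sup_left) (Or.inl hv₃T₁))
    · exact sup_le (sup_le (sup_le (hcopy_le_box le_sup_right (Or.inr hdU₂))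
        (vcopy_le_box (le_trans hEle le_sup_right) (Or.inl hv₁T₁)))
        (vcopy_le_box (le_trans hEle le_sup_right) (Or.inl hv₂T₁)))
        (vcopy_le_box (le_trans hQ_le le_sup_right) (Or.inl hv₃T₁))
    · exact sup_le (sup_le (hcopy_le_box (le_trans hP_le le_sup_right) (Or.inl hpU₁))
        (vcopy_le_box (le_trans hR_le le_sup_left) (Or.inr hwT₂)))
        (hcopy_le_box (le_trans hP''_le le_sup_right) (Or.inl hqU₁))
  · refine ⟨⟨?_, ?_, ?_⟩, ⟨?_, ?_, ?_⟩, ⟨?_, ?_, ?_⟩⟩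
    · -- W₁ tree
      refine isTree_sup (p := (v₃, p)) (hcopy_isTree hT₁.1 p) (vcopy_isTree hR_tree v₃) ?_
      ext ⟨x, k⟩
      simp only [hcopy_verts, vcopy_verts, Set.mem_inter_iff, Set.mem_prod,
        Set.mem_singleton_iff, Prod.mk.injEq]
      constructor
      · rintro ⟨⟨hx, rfl⟩, rfl, hk⟩
        exact ⟨rfl, rfl⟩
      · rintro ⟨rfl, rfl⟩
        exact ⟨⟨hv₃T₁, rfl⟩, rfl, hpR⟩
    · rintro v (rfl | rfl | rfl)
      · exact Or.inl ⟨hv₁T₁, rfl⟩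
      · exact Or.inl ⟨hv₂T₁, rfl⟩
      · exact Or.inr ⟨rfl, hqR⟩
    · rintro v (rfl | rfl | rfl)
      · rw [Subgraph.neighborSet_sup, vcopy_nbr_empty _ _ h13]
        simp only [Set.union_empty]
        rw [hcopy_nbr_ncard]
        exact hT₁.2.2 v₁ (by simp)
      · rw [Subgraph.neighborSet_sup, vcopy_nbr_empty _ _ h23]
        simp only [Set.union_empty]
        rw [hcopy_nbr_ncard]
        exact hT₁.2.2 v₂ (by simp)
      · rw [Subgraph.neighborSet_sup, hcopy_nbr_empty _ _ hpq.symm]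
        simp only [Set.empty_union]
        rw [vcopy_nbr_ncard]
        exact hR_dq
    · -- W₂ tree
      refine isTree_sup (p := (v₃, d)) (isTree_sup (p := (v₂, d)) (isTree_sup (p := (v₁, d))
        (hcopy_isTree hT₂.1 d) (vcopy_isTree hEtree v₁) ?_) (vcopy_isTree hEtree v₂) ?_)
        (vcopy_isTree hQ_tree v₃) ?_
      · ext ⟨x, k⟩
        simp only [hcopy_verts, vcopy_verts, hEverts, Set.mem_inter_iff, Set.mem_prod,
          Set.mem_singleton_iff, Set.mem_insert_iff, Prod.mk.injEq]
        constructor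
        · rintro ⟨⟨hx, rfl⟩, rfl, hk⟩
          exact ⟨rfl, rfl⟩
        · rintro ⟨rfl, rfl⟩
          exact ⟨⟨hv₁T₂, rfl⟩, rfl, Or.inr rfl⟩
      · rw [Subgraph.verts_sup]
        ext ⟨x, k⟩
        simp only [hcopy_verts, vcopy_verts, hEverts, Set.mem_inter_iff, Set.mem_union,
          Set.mem_prod, Set.mem_singleton_iff, Set.mem_insert_iff, Prod.mk.injEq]
        constructor
        · rintro ⟨⟨hx, rfl⟩ | ⟨rfl, hk⟩, rfl, hk2⟩
          · exact ⟨rfl, rfl⟩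
          · exact absurd rfl h12
        · rintro ⟨rfl, rfl⟩
          exact ⟨Or.inl ⟨hv₂T₂, rfl⟩, rfl, Or.inr rfl⟩
      · rw [Subgraph.verts_sup, Subgraph.verts_sup]
        ext ⟨x, k⟩
        simp only [hcopy_verts, vcopy_verts, hEverts, Set.mem_inter_iff, Set.mem_union,
          Set.mem_prod, Set.mem_singleton_iff, Set.mem_insert_iff, Prod.mk.injEq]
        constructor
        · rintro ⟨(⟨hx, rfl⟩ | ⟨rfl, hk⟩) | ⟨rfl, hk⟩, rfl, hk2⟩
          · exact ⟨rfl, rfl⟩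
          · exact absurd rfl h13
          · exact absurd rfl h23
        · rintro ⟨rfl, rfl⟩
          exact ⟨Or.inl (Or.inl ⟨hv₃T₂, rfl⟩), rfl, hdQ⟩
    · rintro v (rfl | rfl | rfl)
      · exact Or.inl (Or.inl (Or.inr ⟨rfl, Or.inl rfl⟩))
      · exact Or.inl (Or.inr ⟨rfl, Or.inl rfl⟩)
      · exact Or.inr ⟨rfl, hqQ⟩
    · have hEnb : E.neighborSet p = {d} := neighborSet_fst_subgraphOfAdj _
      rintro v (rfl | rfl | rfl)
      · rw [Subgraph.neighborSet_sup, Subgraph.neighborSet_sup, Subgraph.neighborSet_sup,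
          hcopy_nbr_empty _ _ hdp.symm, vcopy_nbr_empty _ _ h12, vcopy_nbr_empty _ _ h13]
        simp only [Set.empty_union, Set.union_empty]
        rw [vcopy_nbr_ncard, hEnb]
        exact Set.ncard_singleton _
      · rw [Subgraph.neighborSet_sup, Subgraph.neighborSet_sup, Subgraph.neighborSet_sup,
          hcopy_nbr_empty _ _ hdp.symm, vcopy_nbr_empty _ _ h12.symm, vcopy_nbr_empty _ _ h23]
        simp only [Set.empty_union, Set.union_empty]
        rw [vcopy_nbr_ncard, hEnb]
        exact Set.ncard_singleton _
      · rw [Subgraph.neighborSet_sup, Subgraph.neighborSet_sup, Subgraph.neighborSet_sup,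
          hcopy_nbr_empty _ _ hdq.symm, vcopy_nbr_empty _ _ h13.symm,
          vcopy_nbr_empty _ _ h23.symm]
        simp only [Set.empty_union]
        rw [vcopy_nbr_ncard]
        exact hQ_dq
    · -- W₃ tree
      refine isTree_sup (p := (w, q)) (isTree_sup (p := (w, p)) (hcopy_isTree hP_tree p)
        (vcopy_isTree hR_tree w) ?_) (hcopy_isTree hP''_tree q) ?_
      · ext ⟨x, k⟩
        simp only [hcopy_verts, vcopy_verts, Set.mem_inter_iff, Set.mem_prod,
          Set.mem_singleton_iff, Prod.mk.injEq]
        constructor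
        · rintro ⟨⟨hx, rfl⟩, rfl, hk⟩
          exact ⟨rfl, rfl⟩
        · rintro ⟨rfl, rfl⟩
          exact ⟨⟨hwP, rfl⟩, rfl, hpR⟩
      · rw [Subgraph.verts_sup]
        ext ⟨x, k⟩
        simp only [hcopy_verts, vcopy_verts, Set.mem_inter_iff, Set.mem_union, Set.mem_prod,
          Set.mem_singleton_iff, Prod.mk.injEq]
        constructor
        · rintro ⟨⟨hx, rfl⟩ | ⟨rfl, hk⟩, hx2, rfl⟩
          · exact absurd rfl hpq
          · exact ⟨rfl, rfl⟩
        · rintro ⟨rfl, rfl⟩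
          exact ⟨Or.inr ⟨rfl, hqR⟩, hwP'', rfl⟩
    · rintro v (rfl | rfl | rfl)
      · exact Or.inl (Or.inl ⟨hv₁P, rfl⟩)
      · exact Or.inl (Or.inl ⟨hv₂P, rfl⟩)
      · exact Or.inr ⟨hv₃P'', rfl⟩
    · rintro v (rfl | rfl | rfl)
      · rw [Subgraph.neighborSet_sup, Subgraph.neighborSet_sup,
          vcopy_nbr_empty _ _ hw1.symm, hcopy_nbr_empty _ _ hpq]
        simp only [Set.union_empty]
        rw [hcopy_nbr_ncard]
        exact hP_d1
      · rw [Subgraph.neighborSet_sup, Subgraph.neighborSet_sup,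
          vcopy_nbr_empty _ _ hw2.symm, hcopy_nbr_empty _ _ hpq]
        simp only [Set.union_empty]
        rw [hcopy_nbr_ncard]
        exact hP_d2
      · rw [Subgraph.neighborSet_sup, Subgraph.neighborSet_sup,
          vcopy_nbr_empty _ _ hw3.symm, hcopy_nbr_empty _ _ hpq.symm]
        simp only [Set.empty_union, Set.union_empty]
        rw [hcopy_nbr_ncard]
        exact hP''_d3
  · -- disjointness
    have hTT : T₁.verts ∩ T₂.verts = {v₁, v₂, v₃} := hdisj.2
    refine ⟨⟨?_, ?_⟩, ⟨?_, ?_⟩, ⟨?_, ?_⟩⟩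
    · apply edgeDisj_of_adj
      rintro x y (⟨h1, hx2, hy2⟩ | ⟨h1, hx1, hy1⟩)
        (((⟨h2, hx2', hy2'⟩ | ⟨h2, hx1', hy1'⟩) | ⟨h2, hx1', hy1'⟩) | ⟨h2, hx1', hy1'⟩)
      · exact hdp (hx2'.symm.trans hx2)
      · exact (E.adj_sub h2).ne (hx2.trans hy2.symm)
      · exact (E.adj_sub h2).ne (hx2.trans hy2.symm)
      · exact (U₂.adj_sub (hQ_le.2 h2)).ne (hx2.trans hy2.symm)
      · exact (G.ne_of_adj (T₂.adj_sub h2)) (hx1.trans hy1.symm)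
      · exact h13.symm (hx1.symm.trans hx1')
      · exact h23.symm (hx1.symm.trans hx1')
      · have : s(x.2, y.2) ∈ U₁.edgeSet ∩ U₂.edgeSet :=
          ⟨Subgraph.edgeSet_mono hR_le (Subgraph.mem_edgeSet.mpr h1),
           Subgraph.edgeSet_mono hQ_le (Subgraph.mem_edgeSet.mpr h2)⟩
        rw [hUUe] at this
        exact this
    · -- verts W₁ W₂
      ext ⟨x, k⟩
      simp only [Subgraph.verts_sup, hcopy_verts, vcopy_verts, hEverts, Set.mem_inter_iff,
        Set.mem_union, Set.mem_prod, Set.mem_singleton_iff, Set.mem_insert_iff, Prod.mk.injEq]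
      constructor
      · rintro ⟨⟨hx, rfl⟩ | ⟨hx3, hk⟩,
          ((⟨hx', hk'⟩ | ⟨hx1', hk'⟩) | ⟨hx1', hk'⟩) | ⟨hx1', hk'⟩⟩
        · exact absurd hk'.symm hdp
        · rcases hk' with hk' | hk'
          · exact Or.inl ⟨hx1', hk'⟩
          · exact absurd hk'.symm hdp
        · rcases hk' with hk' | hk'
          · exact Or.inr (Or.inl ⟨hx1', hk'⟩)
          · exact absurd hk'.symm hdp
        · exact absurd hk' hpQ
        · exact absurd (hk' ▸ hk) hdR
        · exact absurd (hx1'.symm.trans hx3) h13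
        · exact absurd (hx1'.symm.trans hx3) h23
        · have hkin : k ∈ U₁.verts ∩ U₂.verts := ⟨hR_le.1 hk, hQ_le.1 hk'⟩
          rw [hUUv] at hkin
          rcases hkin with rfl | rfl
          · exact absurd hk' hpQ
          · exact Or.inr (Or.inr ⟨hx3, rfl⟩)
      · rintro (⟨rfl, rfl⟩ | ⟨rfl, rfl⟩ | ⟨rfl, rfl⟩)
        · exact ⟨Or.inl ⟨hv₁T₁, rfl⟩, Or.inl (Or.inl (Or.inr ⟨rfl, Or.inl rfl⟩))⟩
        · exact ⟨Or.inl ⟨hv₂T₁, rfl⟩, Or.inl (Or.inr ⟨rfl, Or.inl rfl⟩)⟩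
        · exact ⟨Or.inr ⟨rfl, hqR⟩, Or.inr ⟨rfl, hqQ⟩⟩
    · apply edgeDisj_of_adj
      rintro x y (⟨h1, hx2, hy2⟩ | ⟨h1, hx1, hy1⟩)
        ((⟨h2, hx2', hy2'⟩ | ⟨h2, hx1', hy1'⟩) | ⟨h2, hx2', hy2'⟩)
      · have : s(x.1, y.1) ∈ T₁.edgeSet ∩ T₂.edgeSet :=
          ⟨Subgraph.mem_edgeSet.mpr h1,
           Subgraph.edgeSet_mono hP_le (Subgraph.mem_edgeSet.mpr h2)⟩
        rw [hdisj.1] at this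
        exact this
      · exact (U₁.adj_sub (hR_le.2 h2)).ne (hx2.trans hy2.symm)
      · exact hpq (hx2.symm.trans hx2')
      · exact (G.ne_of_adj (T₂.adj_sub (hP_le.2 h2))) (hx1.trans hy1.symm)
      · exact hw3 (hx1'.symm.trans hx1)
      · exact (G.ne_of_adj (T₂.adj_sub (hP''_le.2 h2))) (hx1.trans hy1.symm)
    · -- verts W₁ W₃
      ext ⟨x, k⟩
      simp only [Subgraph.verts_sup, hcopy_verts, vcopy_verts, Set.mem_inter_iff,
        Set.mem_union, Set.mem_prod, Set.mem_singleton_iff, Set.mem_insert_iff, Prod.mk.injEq]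
      constructor
      · rintro ⟨⟨hx, hkp⟩ | ⟨hx3, hk⟩, (⟨hx', hk'⟩ | ⟨hx1', hk'⟩) | ⟨hx', hk'⟩⟩
        · have hxin : x ∈ T₁.verts ∩ T₂.verts := ⟨hx, hP_le.1 hx'⟩
          rw [hTT] at hxin
          rcases hxin with hx1 | hx1 | hx1
          · exact Or.inl ⟨hx1, hkp⟩
          · exact Or.inr (Or.inl ⟨hx1, hkp⟩)
          · exact absurd (hx1 ▸ hx') hv₃P
        · exact absurd (hx1' ▸ hx) hwT₁
        · exact absurd (hkp.symm.trans hk') hpq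
        · exact absurd (hx3 ▸ hx') hv₃P
        · exact absurd (hx1'.symm.trans hx3) hw3
        · exact Or.inr (Or.inr ⟨hx3, hk'⟩)
      · rintro (⟨rfl, rfl⟩ | ⟨rfl, rfl⟩ | ⟨rfl, rfl⟩)
        · exact ⟨Or.inl ⟨hv₁T₁, rfl⟩, Or.inl (Or.inl ⟨hv₁P, rfl⟩)⟩
        · exact ⟨Or.inl ⟨hv₂T₁, rfl⟩, Or.inl (Or.inl ⟨hv₂P, rfl⟩)⟩
        · exact ⟨Or.inr ⟨rfl, hqR⟩, Or.inr ⟨hv₃P'', rfl⟩⟩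
    · apply edgeDisj_of_adj
      rintro x y (((⟨h1, hx2, hy2⟩ | ⟨h1, hx1, hy1⟩) | ⟨h1, hx1, hy1⟩) | ⟨h1, hx1, hy1⟩)
        ((⟨h2, hx2', hy2'⟩ | ⟨h2, hx1', hy1'⟩) | ⟨h2, hx2', hy2'⟩)
      · exact hdp (hx2.symm.trans hx2')
      · exact (U₁.adj_sub (hR_le.2 h2)).ne (hx2.trans hy2.symm)
      · exact hdq (hx2.symm.trans hx2')
      · exact (G.ne_of_adj (T₂.adj_sub (hP_le.2 h2))) (hx1.trans hy1.symm)
      · exact hw1 (hx1'.symm.trans hx1)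
      · exact (G.ne_of_adj (T₂.adj_sub (hP''_le.2 h2))) (hx1.trans hy1.symm)
      · exact (G.ne_of_adj (T₂.adj_sub (hP_le.2 h2))) (hx1.trans hy1.symm)
      · exact hw2 (hx1'.symm.trans hx1)
      · exact (G.ne_of_adj (T₂.adj_sub (hP''_le.2 h2))) (hx1.trans hy1.symm)
      · exact (U₂.adj_sub (hQ_le.2 h1)).ne (hx2'.trans hy2'.symm)
      · exact hw3 (hx1'.symm.trans hx1)
      · exact (U₂.adj_sub (hQ_le.2 h1)).ne (hx2'.trans hy2'.symm)
    · -- verts W₂ W₃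
      ext ⟨x, k⟩
      simp only [Subgraph.verts_sup, hcopy_verts, vcopy_verts, hEverts, Set.mem_inter_iff,
        Set.mem_union, Set.mem_prod, Set.mem_singleton_iff, Set.mem_insert_iff, Prod.mk.injEq]
      constructor
      · rintro ⟨((⟨hx, hkd⟩ | ⟨hx1, hk⟩) | ⟨hx2, hk⟩) | ⟨hx3, hk⟩,
          (⟨hx', hk'⟩ | ⟨hx1', hk'⟩) | ⟨hx', hk'⟩⟩
        · exact absurd (hkd.symm.trans hk') hdp
        · exact absurd (hkd ▸ hk') hdR
        · exact absurd (hkd.symm.trans hk') hdq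
        · rcases hk with hk | hk
          · exact Or.inl ⟨hx1, hk⟩
          · exact absurd (hk.symm.trans hk') hdp
        · exact absurd (hx1'.symm.trans hx1) hw1
        · exact absurd (hx1 ▸ hx') hv₁P''
        · rcases hk with hk | hk
          · exact Or.inr (Or.inl ⟨hx2, hk⟩)
          · exact absurd (hk.symm.trans hk') hdp
        · exact absurd (hx1'.symm.trans hx2) hw2
        · exact absurd (hx2 ▸ hx') hv₂P''
        · exact absurd (hx3 ▸ hx') hv₃P
        · exact absurd (hx1'.symm.trans hx3) hw3
        · exact Or.inr (Or.inr ⟨hx3, hk'⟩)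
      · rintro (⟨rfl, rfl⟩ | ⟨rfl, rfl⟩ | ⟨rfl, rfl⟩)
        · exact ⟨Or.inl (Or.inl (Or.inr ⟨rfl, Or.inl rfl⟩)), Or.inl (Or.inl ⟨hv₁P, rfl⟩)⟩
        · exact ⟨Or.inl (Or.inr ⟨rfl, Or.inl rfl⟩), Or.inl (Or.inl ⟨hv₂P, rfl⟩)⟩
        · exact ⟨Or.inr ⟨rfl, hqQ⟩, Or.inr ⟨hv₃P'', rfl⟩⟩

lemma case_two (v₁ v₂ v₃ : α) (h12 : v₁ ≠ v₂) (h13 : v₁ ≠ v₃) (h23 : v₂ ≠ v₃)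
    (p q : V) (hpq : p ≠ q)
    (T₁ T₂ : G.Subgraph)
    (hT₁ : IsPendantSteinerTree G {v₁, v₂, v₃} T₁)
    (hT₂ : IsPendantSteinerTree G {v₁, v₂, v₃} T₂)
    (hdisj : InternallyDisjoint G {v₁, v₂, v₃} T₁ T₂)
    (U₁ U₂ : H.Subgraph)
    (hU₁ : IsPendantSteinerTree H {p, q} U₁) (hU₂ : IsPendantSteinerTree H {p, q} U₂)
    (hdisjU : InternallyDisjoint H {p, q} U₁ U₂) :
    ∃ W₁ W₂ W₃, Works {(v₁, p), (v₂, p), (v₃, q)} (subgraphBox (T₁ ⊔ T₂) (U₁ ⊔ U₂)) W₁ W₂ W₃ := by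
  obtain ⟨d₂, hnbr₂, hadj₂⟩ := unique_nbr (hU₂.2.2 p (by simp))
  by_cases hd₂ : d₂ = q
  · -- swap the roles of U₁ and U₂
    obtain ⟨d₁, hnbr₁, hadj₁⟩ := unique_nbr (hU₁.2.2 p (by simp))
    have hd₁ : d₁ ≠ q := by
      intro he
      rw [he] at hadj₁
      rw [hd₂] at hadj₂
      have : s(p, q) ∈ U₁.edgeSet ∩ U₂.edgeSet :=
        ⟨Subgraph.mem_edgeSet.mpr hadj₁, Subgraph.mem_edgeSet.mpr hadj₂⟩
      rw [hdisjU.1] at this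
      exact this
    obtain ⟨W₁, W₂, W₃, hw⟩ := case_two_core v₁ v₂ v₃ h12 h13 h23 p q hpq T₁ T₂ hT₁ hT₂ hdisj
      U₂ U₁ hU₂ hU₁ (by rw [Set.inter_comm]; exact hdisjU.2)
      (by rw [Set.inter_comm]; exact hdisjU.1) d₁ hadj₁ hd₁
    exact ⟨W₁, W₂, W₃, by rwa [sup_comm U₂ U₁] at hw⟩
  · exact case_two_core v₁ v₂ v₃ h12 h13 h23 p q hpq T₁ T₂ hT₁ hT₂ hdisj U₁ U₂ hU₁ hU₂
      hdisjU.2 hdisjU.1 d₂ hadj₂ hd₂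

end Cases

end StTools

theorem stmt19 {α V : Type*} (G : SimpleGraph α) (H : SimpleGraph V)
    (u₁ u₂ u₃ : α) (h12 : u₁ ≠ u₂) (h13 : u₁ ≠ u₃) (h23 : u₂ ≠ u₃)
    (a b c : V)
    (T₁ T₂ : G.Subgraph)
    (hT₁ : IsPendantSteinerTree G {u₁, u₂, u₃} T₁)
    (hT₂ : IsPendantSteinerTree G {u₁, u₂, u₃} T₂)
    (hmin₁ : ∀ T' : G.Subgraph, IsPendantSteinerTree G {u₁, u₂, u₃} T' →
      T₁.edgeSet.ncard ≤ T'.edgeSet.ncard)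
    (hmin₂ : ∀ T' : G.Subgraph, IsPendantSteinerTree G {u₁, u₂, u₃} T' →
      T₂.edgeSet.ncard ≤ T'.edgeSet.ncard)
    (hdisj : InternallyDisjoint G {u₁, u₂, u₃} T₁ T₂)
    (T₁' T₂' : H.Subgraph)
    (hT₁' : IsPendantSteinerTree H {a, b, c} T₁')
    (hT₂' : IsPendantSteinerTree H {a, b, c} T₂')
    (hdisj' : InternallyDisjoint H {a, b, c} T₁' T₂') :
    ∃ W : Fin 3 → (G □ H).Subgraph,
      (∀ i, W i ≤ subgraphBox (T₁ ⊔ T₂) (T₁' ⊔ T₂')) ∧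
      (∀ i, IsPendantSteinerTree (G □ H) {(u₁, a), (u₂, b), (u₃, c)} (W i)) ∧
      ∀ i j, i ≠ j →
        InternallyDisjoint (G □ H) {(u₁, a), (u₂, b), (u₃, c)} (W i) (W j) := by
  classical
  open StTools in
  by_cases hab : a = b
  · subst hab
    by_cases hbc : a = c
    · subst hbc
      have hset : ({a, a, a} : Set V) = {a} := by simp
      rw [hset] at hT₁' hT₂' hdisj'
      exact works_package ⟨_, _, _, (case_all_eq u₁ u₂ u₃ h12 h13 h23 a T₁ T₂ hT₁ hT₂ hdisj
        T₁' T₂' hT₁' hT₂' hdisj').choose_spec.choose_spec.choose_spec⟩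
    · have hset : ({a, a, c} : Set V) = {a, c} := by simp
      rw [hset] at hT₁' hT₂' hdisj'
      exact works_package (case_two u₁ u₂ u₃ h12 h13 h23 a c hbc T₁ T₂ hT₁ hT₂ hdisj
        T₁' T₂' hT₁' hT₂' hdisj')
  · by_cases hac : a = c
    · subst hac
      have hset : ({a, b, a} : Set V) = {a, b} := by
        ext z; simp only [Set.mem_insert_iff, Set.mem_singleton_iff]; tauto
      rw [hset] at hT₁' hT₂' hdisj'
      have hsetG : ({u₁, u₂, u₃} : Set α) = {u₁, u₃, u₂} := by
        ext z; simp only [Set.mem_insert_iff, Set.mem_singleton_iff]; tauto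
      rw [hsetG] at hT₁ hT₂ hdisj
      have hsetS : ({(u₁, a), (u₂, b), (u₃, a)} : Set (α × V)) =
          {(u₁, a), (u₃, a), (u₂, b)} := by
        ext z; simp only [Set.mem_insert_iff, Set.mem_singleton_iff]; tauto
      rw [hsetS]
      exact works_package (case_two u₁ u₃ u₂ h13 h12 h23.symm a b hab T₁ T₂ hT₁ hT₂ hdisj
        T₁' T₂' hT₁' hT₂' hdisj')
    · by_cases hbc : b = c
      · subst hbc
        have hset : ({a, b, b} : Set V) = {b, a} := by
          ext z; simp only [Set.mem_insert_iff, Set.mem_singleton_iff]; tauto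
        rw [hset] at hT₁' hT₂' hdisj'
        have hsetG : ({u₁, u₂, u₃} : Set α) = {u₂, u₃, u₁} := by
          ext z; simp only [Set.mem_insert_iff, Set.mem_singleton_iff]; tauto
        rw [hsetG] at hT₁ hT₂ hdisj
        have hsetS : ({(u₁, a), (u₂, b), (u₃, b)} : Set (α × V)) =
            {(u₂, b), (u₃, b), (u₁, a)} := by
          ext z; simp only [Set.mem_insert_iff, Set.mem_singleton_iff]; tauto
        rw [hsetS]
        exact works_package (case_two u₂ u₃ u₁ h23 h12.symm h13.symm b a (Ne.symm hab)
          T₁ T₂ hT₁ hT₂ hdisj T₁' T₂' hT₁' hT₂' hdisj')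
      · exact works_package (case_distinct u₁ u₂ u₃ h12 h13 h23 a b c hab hac hbc
          T₁ T₂ hT₁ hT₂ hdisj T₁' T₂' hT₁' hT₂' hdisj')
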